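/- arXiv:1104.2760 — 5 statements merged into one kernel-verified Lean document; each statement's English description precedes it below -/
import Mathlib

section
/- Let V be a real inner product space and let u_1, u_2, v_0 ∈ V with v_0 ≠ 0 and dim(span{u_1, u_2, v_0}) ≥ 2. Then there exist real numbers α > 0, γ_1, γ_2 such that the vectors v_1 := (u_1 + γ_1 v_0)/α and v_2 := (u_2 + γ_2 v_0)/α satisfy |v_1|^2 = |v_2|^2 = 1 and ⟨v_1, v_2⟩ = 0. -/
/-!
STATEMENT 1: In a real inner product space, given u₁, u₂, v₀ with v₀ ≠ 0 and
dim span{u₁,u₂,v₀} ≥ 2, there are α > 0 and γ₁, γ₂ ∈ ℝ such that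
v₁ = (u₁ + γ₁v₀)/α and v₂ = (u₂ + γ₂v₀)/α are orthonormal.
-/

open scoped InnerProductSpace

/-- Pure real-number key lemma. -/
lemma stmt_1_key (a b c d : ℝ) (ha : 0 ≤ a) (hb : 0 ≤ b) (hd : 0 < d)
    (hcs : c ^ 2 ≤ a * b) (hab : 0 < a ∨ 0 < b) :
    ∃ t₁ t₂ A : ℝ, 0 < A ∧ a + t₁ ^ 2 * d = A ∧ b + t₂ ^ 2 * d = A ∧
      c + t₁ * t₂ * d = 0 := by
  rcases eq_or_ne c 0 with hc | hc
  · rcases le_total b a with h | h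
    · have hA : 0 < a := by rcases hab with h' | h' <;> linarith
      refine ⟨0, Real.sqrt ((a - b) / d), a, hA, by ring, ?_, by simp [hc]⟩
      rw [Real.sq_sqrt (div_nonneg (by linarith) hd.le)]
      field_simp
      ring
    · have hA : 0 < b := by rcases hab with h' | h' <;> linarith
      refine ⟨Real.sqrt ((b - a) / d), 0, b, hA, ?_, by ring, by simp [hc]⟩
      rw [Real.sq_sqrt (div_nonneg (by linarith) hd.le)]
      field_simp
      ring
  · -- c ≠ 0; then a > 0 and b > 0
    have hc2 : 0 < c ^ 2 := by positivity
    have hA0 : 0 < a := by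
      rcases ha.lt_or_eq with h | h; · exact h
      exfalso; nlinarith
    set R : ℝ := Real.sqrt ((a - b) ^ 2 + 4 * c ^ 2) with hRdef
    have hR2 : R ^ 2 = (a - b) ^ 2 + 4 * c ^ 2 := Real.sq_sqrt (by positivity)
    have hRgt : a - b < R ∧ b - a < R := by
      constructor <;>
      · have : 0 ≤ R := Real.sqrt_nonneg _
        nlinarith
    set s : ℝ := ((b - a) + R) / (2 * d) with hsdef
    have hs : 0 < s := div_pos (by linarith [hRgt.2]) (by linarith)
    set t₁ : ℝ := Real.sqrt s with ht1def
    have ht1 : t₁ ^ 2 = s := Real.sq_sqrt hs.le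
    have ht1pos : 0 < t₁ := Real.sqrt_pos.mpr hs
    set t₂ : ℝ := -c / (d * t₁) with ht2def
    refine ⟨t₁, t₂, a + s * d, by positivity, by rw [ht1], ?_, ?_⟩
    · -- b + t₂^2 d = a + s d
      have hquad : d ^ 2 * s ^ 2 + (a - b) * s * d = c ^ 2 := by
        rw [hsdef]; field_simp; linear_combination hR2
      have ht2sq : t₂ ^ 2 = c ^ 2 / (d ^ 2 * s) := by
        rw [ht2def, div_pow, mul_pow, ht1]; ring_nf
      rw [ht2sq, ← hquad]
      field_simp
      ring
    · rw [ht2def]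
      field_simp
      ring

theorem stmt_1 {V : Type*} [NormedAddCommGroup V] [InnerProductSpace ℝ V]
    (u₁ u₂ v₀ : V) (hv₀ : v₀ ≠ 0)
    (hdim : 2 ≤ Module.finrank ℝ (Submodule.span ℝ ({u₁, u₂, v₀} : Set V))) :
    ∃ (α γ₁ γ₂ : ℝ), 0 < α ∧
      ‖α⁻¹ • (u₁ + γ₁ • v₀)‖ ^ 2 = 1 ∧
      ‖α⁻¹ • (u₂ + γ₂ • v₀)‖ ^ 2 = 1 ∧
      ⟪α⁻¹ • (u₁ + γ₁ • v₀), α⁻¹ • (u₂ + γ₂ • v₀)⟫_ℝ = 0 := by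
  have hd : (0:ℝ) < ‖v₀‖ ^ 2 := pow_pos (norm_pos_iff.mpr hv₀) 2
  set d : ℝ := ‖v₀‖ ^ 2 with hddef
  set c₁ : ℝ := ⟪v₀, u₁⟫_ℝ / d with hc1def
  set c₂ : ℝ := ⟪v₀, u₂⟫_ℝ / d with hc2def
  set w₁ : V := u₁ - c₁ • v₀ with hw1def
  set w₂ : V := u₂ - c₂ • v₀ with hw2def
  have hvv : ⟪v₀, v₀⟫_ℝ = d := real_inner_self_eq_norm_sq v₀
  have ho1 : ⟪v₀, w₁⟫_ℝ = 0 := by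
    rw [hw1def, inner_sub_right, real_inner_smul_right, hvv, hc1def]
    field_simp
    ring
  have ho2 : ⟪v₀, w₂⟫_ℝ = 0 := by
    rw [hw2def, inner_sub_right, real_inner_smul_right, hvv, hc2def]
    field_simp
    ring
  have ho1' : ⟪w₁, v₀⟫_ℝ = 0 := by rw [real_inner_comm]; exact ho1
  have ho2' : ⟪w₂, v₀⟫_ℝ = 0 := by rw [real_inner_comm]; exact ho2
  -- not both w₁, w₂ are zero
  have hne : w₁ ≠ 0 ∨ w₂ ≠ 0 := by
    by_contra h
    push_neg at h
    obtain ⟨h1, h2⟩ := h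
    have hu1 : u₁ ∈ Submodule.span ℝ ({v₀} : Set V) := by
      have : u₁ = c₁ • v₀ := by rwa [sub_eq_zero] at h1
      rw [this]
      exact Submodule.smul_mem _ _ (Submodule.mem_span_singleton_self v₀)
    have hu2 : u₂ ∈ Submodule.span ℝ ({v₀} : Set V) := by
      have : u₂ = c₂ • v₀ := by rwa [sub_eq_zero] at h2
      rw [this]
      exact Submodule.smul_mem _ _ (Submodule.mem_span_singleton_self v₀)
    have hle : Submodule.span ℝ ({u₁, u₂, v₀} : Set V) ≤
        Submodule.span ℝ ({v₀} : Set V) := by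
      rw [Submodule.span_le]
      intro x hx
      simp only [Set.mem_insert_iff, Set.mem_singleton_iff] at hx
      rcases hx with rfl | rfl | hx'
      · exact hu1
      · exact hu2
      · rw [hx']; exact Submodule.mem_span_singleton_self v₀
    have := Submodule.finrank_mono (R := ℝ) hle
    rw [finrank_span_singleton hv₀] at this
    omega
  have hab : 0 < ‖w₁‖ ^ 2 ∨ 0 < ‖w₂‖ ^ 2 := by
    rcases hne with h | h
    · exact Or.inl (pow_pos (norm_pos_iff.mpr h) 2)
    · exact Or.inr (pow_pos (norm_pos_iff.mpr h) 2)
  have hcs : ⟪w₁, w₂⟫_ℝ ^ 2 ≤ ‖w₁‖ ^ 2 * ‖w₂‖ ^ 2 := by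
    have := real_inner_mul_inner_self_le w₁ w₂
    rw [real_inner_self_eq_norm_sq, real_inner_self_eq_norm_sq] at this
    nlinarith [this]
  obtain ⟨t₁, t₂, A, hA, he1, he2, he3⟩ :=
    stmt_1_key (‖w₁‖ ^ 2) (‖w₂‖ ^ 2) (⟪w₁, w₂⟫_ℝ) d (by positivity) (by positivity)
      hd hcs hab
  set α : ℝ := Real.sqrt A with hα
  have hα2 : α ^ 2 = A := Real.sq_sqrt hA.le
  have hαpos : 0 < α := Real.sqrt_pos.mpr hA
  have hx1 : u₁ + (t₁ - c₁) • v₀ = w₁ + t₁ • v₀ := by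
    rw [hw1def, sub_smul]; abel
  have hx2 : u₂ + (t₂ - c₂) • v₀ = w₂ + t₂ • v₀ := by
    rw [hw2def, sub_smul]; abel
  have hn1 : ‖w₁ + t₁ • v₀‖ ^ 2 = A := by
    rw [norm_add_sq_real, real_inner_smul_right, ho1', norm_smul, mul_pow]
    simp only [Real.norm_eq_abs, sq_abs]
    rw [← hddef] at *
    linarith [he1]
  have hn2 : ‖w₂ + t₂ • v₀‖ ^ 2 = A := by
    rw [norm_add_sq_real, real_inner_smul_right, ho2', norm_smul, mul_pow]
    simp only [Real.norm_eq_abs, sq_abs]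
    rw [← hddef] at *
    linarith [he2]
  refine ⟨α, t₁ - c₁, t₂ - c₂, hαpos, ?_, ?_, ?_⟩
  · rw [hx1, norm_smul, mul_pow]
    simp only [Real.norm_eq_abs, sq_abs]
    rw [hn1, inv_pow, hα2, inv_mul_cancel₀ hA.ne']
  · rw [hx2, norm_smul, mul_pow]
    simp only [Real.norm_eq_abs, sq_abs]
    rw [hn2, inv_pow, hα2, inv_mul_cancel₀ hA.ne']
  · rw [hx1, hx2, real_inner_smul_left, real_inner_smul_right]
    simp only [inner_add_left, inner_add_right, real_inner_smul_left,
      real_inner_smul_right, ho1', ho2, hvv]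
    linear_combination (α⁻¹ * α⁻¹) * he3
end

section
/- Let V be a finite-dimensional real inner product space, v_0 ∈ V with v_0 ≠ 0, E ⊆ {x ∈ V : ⟨x, v_0⟩ = 1}, and u_1, u_2 ∈ V not both scalar multiples of v_0. Define Φ : E → ℂ by Φ(x) = ⟨x, u_1⟩ + i⟨x, u_2⟩. Then there exist a rank-2 orthogonal projection π : V → V with range V_0, a real-linear isometry θ : V_0 → ℂ, a real number α > 0 and a complex number w such that Φ(x) = α·θ(π(x)) − w for all x ∈ E; that is, Φ is an orthogonal projection followed by a similarity transformation (dilation and translation). -/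
/-!
STATEMENT 2: Let V be a finite-dimensional real inner product space, v₀ ≠ 0,
E ⊆ {x : ⟪x,v₀⟫ = 1}, and u₁, u₂ not both scalar multiples of v₀.  Then the map
Φ(x) = ⟪x,u₁⟫ + i⟪x,u₂⟫ is, on E, a rank-2 orthogonal projection (onto the span
of an orthonormal pair v₁, v₂, identified with ℂ via
θ(a₁v₁ + a₂v₂) = a₁ + i·a₂, so that θ(π x) = ⟪x,v₁⟫ + i⟪x,v₂⟫) followed by a
similarity transformation: Φ(x) = α·θ(π x) − w with α > 0.
-/

open scoped InnerProductSpace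

set_option maxHeartbeats 1000000 in
theorem stmt_2 {V : Type*} [NormedAddCommGroup V] [InnerProductSpace ℝ V]
    [FiniteDimensional ℝ V]
    (v₀ : V) (hv₀ : v₀ ≠ 0) (E : Set V) (hE : E ⊆ {x : V | ⟪x, v₀⟫_ℝ = 1})
    (u₁ u₂ : V)
    (hu : ¬ ((∃ c : ℝ, u₁ = c • v₀) ∧ (∃ c : ℝ, u₂ = c • v₀))) :
    ∃ (v₁ v₂ : V) (α : ℝ) (w : ℂ),
      ‖v₁‖ = 1 ∧ ‖v₂‖ = 1 ∧ ⟪v₁, v₂⟫_ℝ = 0 ∧ 0 < α ∧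
      ∀ x ∈ E,
        (⟪x, u₁⟫_ℝ : ℂ) + (⟪x, u₂⟫_ℝ : ℂ) * Complex.I =
          (α : ℂ) * ((⟪x, v₁⟫_ℝ : ℂ) + (⟪x, v₂⟫_ℝ : ℂ) * Complex.I) - w := by
  have hnpos : (0:ℝ) < ‖v₀‖ := norm_pos_iff.mpr hv₀
  set n : ℝ := ‖v₀‖ with hn
  have hn0 : n ≠ 0 := ne_of_gt hnpos
  set e : V := n⁻¹ • v₀ with he
  have hee : ⟪e, e⟫_ℝ = 1 := by
    rw [he, real_inner_smul_left, real_inner_smul_right, real_inner_self_eq_norm_sq]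
    field_simp
    rw [hn]
  set p₁ : V := u₁ - ⟪u₁, e⟫_ℝ • e with hp₁
  set p₂ : V := u₂ - ⟪u₂, e⟫_ℝ • e with hp₂
  have hp₁e : ⟪p₁, e⟫_ℝ = 0 := by
    simp only [hp₁, inner_sub_left, real_inner_smul_left, hee, mul_one, sub_self]
  have hp₂e : ⟪p₂, e⟫_ℝ = 0 := by
    simp only [hp₂, inner_sub_left, real_inner_smul_left, hee, mul_one, sub_self]
  have hep₁ : ⟪e, p₁⟫_ℝ = 0 := by rw [real_inner_comm]; exact hp₁e
  have hep₂ : ⟪e, p₂⟫_ℝ = 0 := by rw [real_inner_comm]; exact hp₂e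
  set a : ℝ := ⟪p₁, p₂⟫_ℝ with ha
  set P₁ : ℝ := ⟪p₁, p₁⟫_ℝ with hP₁
  set P₂ : ℝ := ⟪p₂, p₂⟫_ℝ with hP₂
  have hP₁nn : 0 ≤ P₁ := real_inner_self_nonneg
  have hP₂nn : 0 ≤ P₂ := real_inner_self_nonneg
  set d : ℝ := P₂ - P₁ with hd
  set r : ℝ := Real.sqrt (d^2 + 4*a^2) with hr
  have hrnn : 0 ≤ r := Real.sqrt_nonneg _
  have hr2 : r^2 = d^2 + 4*a^2 := Real.sq_sqrt (by positivity)
  have hrd : |d| ≤ r := by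
    rw [hr]
    calc |d| = Real.sqrt (d^2) := by rw [Real.sqrt_sq_eq_abs]
    _ ≤ _ := Real.sqrt_le_sqrt (by nlinarith)
  set X : ℝ := (d + r)/2 with hX
  set Y : ℝ := (r - d)/2 with hY
  have hXnn : 0 ≤ X := by
    have := neg_abs_le d; rw [hX]; linarith [hrd, this]
  have hYnn : 0 ≤ Y := by
    have := le_abs_self d; rw [hY]; linarith [hrd, this]
  have hXY : X * Y = a^2 := by
    have : X * Y = (r^2 - d^2)/4 := by rw [hX, hY]; ring
    rw [this, hr2]; ring
  set s₁ : ℝ := Real.sqrt X with hs₁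
  set s₂ : ℝ := if a = 0 then Real.sqrt Y else -a/s₁ with hs₂
  have hs₁sq : s₁^2 = X := Real.sq_sqrt hXnn
  have hs₁nn : 0 ≤ s₁ := Real.sqrt_nonneg _
  have hs₂sq : s₂^2 = Y := by
    rw [hs₂]
    by_cases h : a = 0
    · simp [h, Real.sq_sqrt hYnn]
    · have hXpos : 0 < X := by
        rcases hXnn.lt_or_eq with h' | h'
        · exact h'
        · exfalso; apply h; nlinarith
      have hs₁pos : 0 < s₁ := Real.sqrt_pos.mpr hXpos
      simp only [if_neg h]
      field_simp
      nlinarith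
  have hs₁s₂ : s₁ * s₂ = -a := by
    rw [hs₂]
    by_cases h : a = 0
    · rw [if_pos h, hs₁, ← Real.sqrt_mul hXnn, hXY, h]
      simp
    · have hXpos : 0 < X := by
        rcases hXnn.lt_or_eq with h' | h'
        · exact h'
        · exfalso; apply h; nlinarith
      have hs₁pos : 0 < s₁ := Real.sqrt_pos.mpr hXpos
      simp only [if_neg h]
      field_simp
  set w₁ : V := s₁ • e + p₁ with hw₁
  set w₂ : V := s₂ • e + p₂ with hw₂
  have hinner12 : ⟪w₁, w₂⟫_ℝ = 0 := by
    rw [hw₁, hw₂]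
    simp only [inner_add_left, inner_add_right, real_inner_smul_left,
      real_inner_smul_right, hee, hep₂, hp₁e, ← ha]
    linear_combination hs₁s₂
  have hinner11 : ⟪w₁, w₁⟫_ℝ = X + P₁ := by
    rw [hw₁]
    simp only [inner_add_left, inner_add_right, real_inner_smul_left,
      real_inner_smul_right, hee, hep₁, hp₁e, ← hP₁]
    rw [show s₁ * (s₁ * 1) + s₁ * 0 + (s₁ * 0 + P₁) = s₁^2 + P₁ by ring, hs₁sq]
  have hinner22 : ⟪w₂, w₂⟫_ℝ = Y + P₂ := by
    rw [hw₂]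
    simp only [inner_add_left, inner_add_right, real_inner_smul_left,
      real_inner_smul_right, hee, hep₂, hp₂e, ← hP₂]
    rw [show s₂ * (s₂ * 1) + s₂ * 0 + (s₂ * 0 + P₂) = s₂^2 + P₂ by ring, hs₂sq]
  have hXYd : X - Y = d := by rw [hX, hY]; ring
  have hpnz : ¬ (p₁ = 0 ∧ p₂ = 0) := by
    rintro ⟨h1, h2⟩
    rw [hp₁, sub_eq_zero] at h1
    rw [hp₂, sub_eq_zero] at h2
    exact hu ⟨⟨⟪u₁, e⟫_ℝ * n⁻¹, by rw [mul_smul, ← he]; exact h1⟩,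
      ⟨⟪u₂, e⟫_ℝ * n⁻¹, by rw [mul_smul, ← he]; exact h2⟩⟩
  set α : ℝ := ‖w₁‖ with hα
  have hα2 : α^2 = X + P₁ := by
    rw [hα, ← real_inner_self_eq_norm_sq, hinner11]
  have hαpos : 0 < α := by
    rcases (norm_nonneg w₁).lt_or_eq with h | h
    · exact h
    · exfalso
      have hX0 : X + P₁ = 0 := by rw [← hα2, hα, ← h]; norm_num
      have hXz : X = 0 := by linarith [hXnn, hP₁nn, hX0]
      have hP₁z : P₁ = 0 := by linarith
      have hP₂z : P₂ = 0 := by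
        have : Y + P₂ = X + P₁ := by rw [hd] at hXYd; linarith
        linarith [hYnn, hP₂nn]
      exact hpnz ⟨inner_self_eq_zero.mp (by rw [← hP₁]; exact hP₁z),
        inner_self_eq_zero.mp (by rw [← hP₂]; exact hP₂z)⟩
  have hα0 : α ≠ 0 := ne_of_gt hαpos
  have hnw₂ : ‖w₂‖ = α := by
    have h1 : ‖w₂‖^2 = α^2 := by
      rw [← real_inner_self_eq_norm_sq, hinner22, hα2]
      rw [hd] at hXYd; linarith
    nlinarith [norm_nonneg w₂, hαpos]
  set v₁ : V := α⁻¹ • w₁ with hv₁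
  set v₂ : V := α⁻¹ • w₂ with hv₂
  refine ⟨v₁, v₂, α, -(((⟪u₁, e⟫_ℝ - s₁) * n⁻¹ : ℝ) + ((⟪u₂, e⟫_ℝ - s₂) * n⁻¹ : ℝ) * Complex.I),
    ?_, ?_, ?_, hαpos, ?_⟩
  · rw [hv₁, norm_smul, ← hα, Real.norm_eq_abs, abs_inv, abs_of_pos hαpos,
      inv_mul_cancel₀ hα0]
  · rw [hv₂, norm_smul, hnw₂, Real.norm_eq_abs, abs_inv, abs_of_pos hαpos,
      inv_mul_cancel₀ hα0]
  · rw [hv₁, hv₂, real_inner_smul_left, real_inner_smul_right, hinner12]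
    ring
  · intro x hx
    have hxv₀ : ⟪x, v₀⟫_ℝ = 1 := hE hx
    have hxe : ⟪x, e⟫_ℝ = n⁻¹ := by
      rw [he, real_inner_smul_right, hxv₀, mul_one]
    have hwv₁ : α • v₁ = w₁ := by
      rw [hv₁, smul_smul, mul_inv_cancel₀ hα0, one_smul]
    have hwv₂ : α • v₂ = w₂ := by
      rw [hv₂, smul_smul, mul_inv_cancel₀ hα0, one_smul]
    have hu₁eq : u₁ = α • v₁ + (⟪u₁, e⟫_ℝ - s₁) • e := by
      rw [hwv₁, hw₁, hp₁]; module
    have hu₂eq : u₂ = α • v₂ + (⟪u₂, e⟫_ℝ - s₂) • e := by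
      rw [hwv₂, hw₂, hp₂]; module
    have hsm : ∀ c : ℝ, ⟪x, c • e⟫_ℝ = c * n⁻¹ := fun c => by
      rw [real_inner_smul_right, hxe]
    have h1 : ⟪x, u₁⟫_ℝ = α * ⟪x, v₁⟫_ℝ + (⟪u₁, e⟫_ℝ - s₁) * n⁻¹ := by
      conv_lhs => rw [hu₁eq]
      rw [inner_add_right, real_inner_smul_right, hsm]
    have h2 : ⟪x, u₂⟫_ℝ = α * ⟪x, v₂⟫_ℝ + (⟪u₂, e⟫_ℝ - s₂) * n⁻¹ := by
      conv_lhs => rw [hu₂eq]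
      rw [inner_add_right, real_inner_smul_right, hsm]
    rw [h1, h2]
    push_cast
    ring
end

section
/- Let A be a normal N×N complex matrix that is not a scalar multiple of the identity. Then there exist a rank-2 orthogonal projection π of ℝ^N (with the standard inner product), a real-linear isometry θ from the range of π onto ℂ, a real number α > 0 and a complex number w such that the numerical range satisfies W(A) = {α·θ(π(t)) − w : t ∈ Δ_{N-1}}. In other words, W(A) is the image of an orthogonal projection of the regular probability simplex Δ_{N-1} onto a two-plane, followed by a similarity transformation (dilation and translation) of the plane. -/
/-!
STATEMENT 3: For a normal N×N complex matrix A which is not a scalar multiple of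
the identity, the numerical range W(A) is the image of the orthogonal projection
of the probability simplex Δ_{N-1} ⊂ ℝ^N onto a two-plane (spanned by an
orthonormal pair v₁, v₂, the projection being t ↦ ⟪t,v₁⟫v₁ + ⟪t,v₂⟫v₂,
identified with ℂ via θ(a₁v₁ + a₂v₂) = a₁ + i·a₂), followed by a similarity
transformation z ↦ α·z − w with α > 0.
-/

open Matrix
open scoped InnerProductSpace

noncomputable section

/-- The numerical range W(A) = {⟨ψ, Aψ⟩ : ‖ψ‖ = 1}. -/
def numericalRange {N : ℕ} (A : Matrix (Fin N) (Fin N) ℂ) : Set ℂ :=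
  {z | ∃ ψ : EuclideanSpace ℂ (Fin N), ‖ψ‖ = 1 ∧ z = ⟪ψ, Matrix.toEuclideanLin A ψ⟫_ℂ}

/-- The probability simplex Δ_{N-1} = {t ∈ ℝ^N : tᵢ ≥ 0, ∑ tᵢ = 1}. -/
def probSimplex (N : ℕ) : Set (EuclideanSpace ℝ (Fin N)) :=
  {t | (∀ i, 0 ≤ t i) ∧ ∑ i, t i = 1}

set_option maxHeartbeats 1000000 in
open Module.End in
/-- Spectral theorem for normal matrices: there is an orthonormal eigenbasis. -/
lemma normal_eigenbasis {N : ℕ} (A : Matrix (Fin N) (Fin N) ℂ)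
    (hnormal : A * Aᴴ = Aᴴ * A) :
    ∃ (b : OrthonormalBasis (Fin N) ℂ (EuclideanSpace ℂ (Fin N))) (μ : Fin N → ℂ),
      ∀ j, Matrix.toEuclideanLin A (b j) = μ j • b j := by
  classical
  set T : EuclideanSpace ℂ (Fin N) →ₗ[ℂ] EuclideanSpace ℂ (Fin N) :=
    Matrix.toEuclideanLin A with hT
  set S : EuclideanSpace ℂ (Fin N) →ₗ[ℂ] EuclideanSpace ℂ (Fin N) :=
    Matrix.toEuclideanLin Aᴴ with hSdef
  have hS : S = LinearMap.adjoint T := Matrix.toEuclideanLin_conjTranspose_eq_adjoint A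
  have hmul : ∀ (M P : Matrix (Fin N) (Fin N) ℂ),
      Matrix.toEuclideanLin (M * P) = Matrix.toEuclideanLin M ∘ₗ Matrix.toEuclideanLin P := by
    intro M P
    rw [Matrix.toEuclideanLin_eq_toLin]
    exact Matrix.toLin_mul _ _ _ M P
  have hTS : T * S = S * T := by
    have h1 := hmul A Aᴴ
    have h2 := hmul Aᴴ A
    rw [hnormal, h2] at h1
    rw [Module.End.mul_eq_comp, Module.End.mul_eq_comp]
    exact h1.symm
  set H : EuclideanSpace ℂ (Fin N) →ₗ[ℂ] EuclideanSpace ℂ (Fin N) := T + S with hHdef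
  set K : EuclideanSpace ℂ (Fin N) →ₗ[ℂ] EuclideanSpace ℂ (Fin N) :=
    Complex.I • (S - T) with hKdef
  have hH : H.IsSymmetric := by
    intro x y
    simp only [hHdef, LinearMap.add_apply, inner_add_left, inner_add_right, hS,
      LinearMap.adjoint_inner_left, LinearMap.adjoint_inner_right]
    ring
  have hK : K.IsSymmetric := by
    intro x y
    simp only [hKdef, LinearMap.smul_apply, LinearMap.sub_apply, inner_smul_left,
      inner_smul_right, inner_sub_left, inner_sub_right, hS,
      LinearMap.adjoint_inner_left, LinearMap.adjoint_inner_right, Complex.conj_I]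
    ring
  have hC : Commute H K := by
    have e1 : (T + S) * (S - T) = S * S - T * T := by
      have h : T * S - S * T = 0 := by rw [hTS, sub_self]
      calc (T + S) * (S - T) = (T * S - S * T) + (S * S - T * T) := by noncomm_ring
      _ = S * S - T * T := by rw [h, zero_add]
    have e2 : (S - T) * (T + S) = S * S - T * T := by
      have h : S * T - T * S = 0 := by rw [hTS, sub_self]
      calc (S - T) * (T + S) = (S * T - T * S) + (S * S - T * T) := by noncomm_ring
      _ = S * S - T * T := by rw [h, zero_add]
    show H * K = K * H
    rw [hHdef, hKdef, mul_smul_comm, smul_mul_assoc, e1, e2]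
  have h2T : H + Complex.I • K = (2 : ℂ) • T := by
    rw [hHdef, hKdef, smul_smul, Complex.I_mul_I, smul_sub]
    module
  have hT2 : T = (2 : ℂ)⁻¹ • (H + Complex.I • K) := by
    rw [h2T, smul_smul]
    norm_num
  set V : ℂ × ℂ → Submodule ℂ (EuclideanSpace ℂ (Fin N)) :=
    fun p => eigenspace H p.2 ⊓ eigenspace K p.1 with hVdef
  have hInt : DirectSum.IsInternal V :=
    LinearMap.IsSymmetric.directSum_isInternal_of_commute hH hK hC
  have hOrth := LinearMap.IsSymmetric.orthogonalFamily_eigenspace_inf_eigenspace hH hK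
  haveI : Fintype {p : ℂ × ℂ // V p ≠ ⊥} :=
    hInt.submodule_iSupIndep.fintypeNeBotOfFiniteDimensional
  have hInt' : DirectSum.IsInternal (fun i : {p : ℂ × ℂ // V p ≠ ⊥} => V i.1) := by
    rw [DirectSum.isInternal_submodule_iff_iSupIndep_and_iSup_eq_top]
    refine ⟨hInt.submodule_iSupIndep.comp Subtype.val_injective, ?_⟩
    rw [← hInt.submodule_iSup_eq_top]
    apply le_antisymm
    · exact iSup_le fun i => le_iSup V i.1
    · refine iSup_le fun p => ?_
      by_cases h : V p = ⊥
      · simp [h]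
      · exact le_iSup (fun i : {p : ℂ × ℂ // V p ≠ ⊥} => V i.1) ⟨p, h⟩
  have hOrth' := hOrth.comp
    (Subtype.val_injective : Function.Injective (Subtype.val : {p : ℂ × ℂ // V p ≠ ⊥} → ℂ × ℂ))
  have hn : Module.finrank ℂ (EuclideanSpace ℂ (Fin N)) = N := finrank_euclideanSpace_fin
  set b := hInt'.subordinateOrthonormalBasis hn hOrth' with hbdef
  set idx : Fin N → {p : ℂ × ℂ // V p ≠ ⊥} :=
    fun a => hInt'.subordinateOrthonormalBasisIndex hn a hOrth' with hidxdef
  have hmem : ∀ a, b a ∈ V (idx a).1 :=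
    fun a => hInt'.subordinateOrthonormalBasis_subordinate hn a hOrth'
  refine ⟨b, fun j => (2 : ℂ)⁻¹ * ((idx j).1.2 + Complex.I * (idx j).1.1), fun j => ?_⟩
  obtain ⟨h1, h2⟩ := Submodule.mem_inf.mp (hmem j)
  rw [mem_eigenspace_iff] at h1 h2
  have : T (b j) = (2 : ℂ)⁻¹ • (H (b j) + Complex.I • K (b j)) := by
    rw [hT2]; simp
  rw [this, h1, h2]
  module

set_option maxHeartbeats 1000000 in
/-- Numerical range via an orthonormal eigenbasis. -/
lemma nr_eq_convex {N : ℕ} (A : Matrix (Fin N) (Fin N) ℂ)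
    (b : OrthonormalBasis (Fin N) ℂ (EuclideanSpace ℂ (Fin N))) (μ : Fin N → ℂ)
    (hbμ : ∀ j, Matrix.toEuclideanLin A (b j) = μ j • b j) :
    numericalRange A =
      {z | ∃ t : Fin N → ℝ, (∀ i, 0 ≤ t i) ∧ (∑ i, t i) = 1 ∧
        z = ∑ j, (t j : ℂ) * μ j} := by
  ext z
  constructor
  · rintro ⟨ψ, hψ, rfl⟩
    set c : Fin N → ℂ := fun j => b.repr ψ j with hc
    have hsum : ∑ j, c j • b j = ψ := b.sum_repr ψ
    have hT : Matrix.toEuclideanLin A ψ = ∑ j, (c j * μ j) • b j := by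
      rw [← hsum, map_sum]
      refine Finset.sum_congr rfl fun j _ => ?_
      rw [_root_.map_smul, hbμ j, smul_smul]
    have hinner : ⟪ψ, Matrix.toEuclideanLin A ψ⟫_ℂ = ∑ j, (starRingEnd ℂ) (c j) * (c j * μ j) := by
      nth_rw 1 [← hsum]
      rw [hT]
      exact b.orthonormal.inner_sum c (fun j => c j * μ j) Finset.univ
    have hone : ⟪ψ, ψ⟫_ℂ = 1 := by
      rw [inner_self_eq_norm_sq_to_K, hψ]
      norm_num
    have hsum1 : ∑ j, Complex.normSq (c j) = 1 := by
      have h2 : ⟪ψ, ψ⟫_ℂ = ∑ j, (starRingEnd ℂ) (c j) * c j := by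
        nth_rw 1 [← hsum]; nth_rw 1 [← hsum]
        exact b.orthonormal.inner_sum c c Finset.univ
      have h3 : (∑ j, (Complex.normSq (c j) : ℂ)) = 1 := by
        rw [← hone, h2]
        exact Finset.sum_congr rfl fun j _ => Complex.normSq_eq_conj_mul_self
      exact_mod_cast h3
    refine ⟨fun j => Complex.normSq (c j), fun j => Complex.normSq_nonneg _, hsum1, ?_⟩
    rw [hinner]
    refine Finset.sum_congr rfl fun j _ => ?_
    rw [Complex.normSq_eq_conj_mul_self]
    ring
  · rintro ⟨t, ht0, ht1, rfl⟩
    set ψ : EuclideanSpace ℂ (Fin N) := ∑ j, ((Real.sqrt (t j) : ℂ)) • b j with hψdef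
    have hps : ⟪ψ, ψ⟫_ℂ = 1 := by
      rw [hψdef, b.orthonormal.inner_sum]
      have : ∀ j ∈ Finset.univ, (starRingEnd ℂ) ((Real.sqrt (t j) : ℂ)) * (Real.sqrt (t j) : ℂ)
          = ((t j : ℝ) : ℂ) := by
        intro j _
        rw [Complex.conj_ofReal, ← Complex.ofReal_mul, Real.mul_self_sqrt (ht0 j)]
      rw [Finset.sum_congr rfl this, ← Complex.ofReal_sum, ht1, Complex.ofReal_one]
    have hnorm : ‖ψ‖ = 1 := by
      have h := inner_self_eq_norm_sq_to_K (𝕜 := ℂ) ψ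
      rw [hps] at h
      have h3 : ((‖ψ‖ ^ 2 : ℝ) : ℂ) = ((1 : ℝ) : ℂ) := by push_cast; exact h.symm
      have h2 : ‖ψ‖ ^ 2 = 1 := Complex.ofReal_inj.mp h3
      nlinarith [norm_nonneg ψ]
    refine ⟨ψ, hnorm, ?_⟩
    have hT : Matrix.toEuclideanLin A ψ = ∑ j, ((Real.sqrt (t j) : ℂ) * μ j) • b j := by
      rw [hψdef, map_sum]
      refine Finset.sum_congr rfl fun j _ => ?_
      rw [_root_.map_smul, hbμ j, smul_smul]
    rw [hψdef, hT, b.orthonormal.inner_sum]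
    refine (Finset.sum_congr rfl fun j _ => ?_).symm
    rw [Complex.conj_ofReal, ← mul_assoc, ← Complex.ofReal_mul, Real.mul_self_sqrt (ht0 j)]

set_option maxHeartbeats 1000000 in
theorem stmt_3 {N : ℕ} (A : Matrix (Fin N) (Fin N) ℂ)
    (hnormal : A * Aᴴ = Aᴴ * A)
    (hA : ∀ c : ℂ, A ≠ c • (1 : Matrix (Fin N) (Fin N) ℂ)) :
    ∃ (v₁ v₂ : EuclideanSpace ℝ (Fin N)) (α : ℝ) (w : ℂ),
      ‖v₁‖ = 1 ∧ ‖v₂‖ = 1 ∧ ⟪v₁, v₂⟫_ℝ = 0 ∧ 0 < α ∧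
      numericalRange A =
        {z | ∃ t ∈ probSimplex N,
          z = (α : ℂ) * ((⟪t, v₁⟫_ℝ : ℂ) + (⟪t, v₂⟫_ℝ : ℂ) * Complex.I) - w} := by
  classical
  obtain ⟨b, μ, hbμ⟩ := normal_eigenbasis A hnormal
  -- μ is not constant
  have hne : ∃ j k : Fin N, μ j ≠ μ k := by
    by_contra h
    push_neg at h
    rcases Nat.eq_zero_or_pos N with hN | hN
    · subst hN
      exact hA 0 (by ext i j; exact i.elim0)
    · obtain ⟨j0⟩ : Nonempty (Fin N) := ⟨⟨0, hN⟩⟩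
      apply hA (μ j0)
      apply Matrix.toEuclideanLin.injective
      apply b.toBasis.ext
      intro j
      have hone : Matrix.toEuclideanLin (1 : Matrix (Fin N) (Fin N) ℂ) = LinearMap.id := by
        rw [Matrix.toEuclideanLin_eq_toLin]; exact Matrix.toLin_one _
      rw [OrthonormalBasis.coe_toBasis, hbμ j, h j j0, _root_.map_smul, hone]
      simp
  have hN : (0 : ℕ) < N := by
    rcases Nat.eq_zero_or_pos N with h | h
    · exfalso; subst h; obtain ⟨j, _, _⟩ := hne; exact j.elim0
    · exact h
  have hNC : (N : ℂ) ≠ 0 := Nat.cast_ne_zero.mpr hN.ne'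
  -- solve the quadratic ∑ (μ j + ζ)^2 = 0
  set s : ℂ := ∑ j, μ j with hsdef
  set q : ℂ := ∑ j, μ j ^ 2 with hqdef
  obtain ⟨d, hd⟩ := IsAlgClosed.exists_pow_nat_eq (k := ℂ) (s ^ 2 - (N : ℂ) * q) zero_lt_two
  set ζ : ℂ := (d - s) / N with hζdef
  have hquad : (N : ℂ) * ζ ^ 2 + 2 * s * ζ + q = 0 := by
    rw [hζdef]
    field_simp
    linear_combination hd
  have hsumsq : ∑ j, (μ j + ζ) ^ 2 = 0 := by
    have h1 : ∑ j, (μ j + ζ) ^ 2 = q + 2 * s * ζ + (N : ℂ) * ζ ^ 2 := by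
      rw [Finset.sum_congr rfl (fun j _ => by ring :
        ∀ j ∈ Finset.univ, (μ j + ζ) ^ 2 = μ j ^ 2 + 2 * ζ * μ j + ζ ^ 2)]
      rw [Finset.sum_add_distrib, Finset.sum_add_distrib, ← Finset.mul_sum,
        Finset.sum_const, Finset.card_univ, Fintype.card_fin, nsmul_eq_mul]
      rw [hsdef, hqdef]
      ring
    rw [h1]
    linear_combination hquad
  -- real and imaginary parts
  set u : EuclideanSpace ℝ (Fin N) := WithLp.toLp 2 (fun j => (μ j + ζ).re) with hudef
  set v : EuclideanSpace ℝ (Fin N) := WithLp.toLp 2 (fun j => (μ j + ζ).im) with hvdef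
  have hre : ∑ j, ((μ j + ζ).re ^ 2 - (μ j + ζ).im ^ 2) = 0 := by
    have h0 := congrArg Complex.re hsumsq
    rw [Complex.re_sum] at h0
    simp only [Complex.zero_re] at h0
    rw [← h0]
    exact Finset.sum_congr rfl fun j _ => by simp [pow_two, Complex.mul_re]
  have him : ∑ j, (μ j + ζ).re * (μ j + ζ).im = 0 := by
    have h1 := congrArg Complex.im hsumsq
    rw [Complex.im_sum] at h1
    simp only [Complex.zero_im] at h1
    have h2 : ∑ j, ((μ j + ζ) ^ 2).im = ∑ j, 2 * ((μ j + ζ).re * (μ j + ζ).im) :=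
      Finset.sum_congr rfl fun j _ => by simp [pow_two, Complex.mul_im]; ring
    rw [h2, ← Finset.mul_sum] at h1
    linarith
  have hre2 : ∑ j, (μ j + ζ).re ^ 2 = ∑ j, (μ j + ζ).im ^ 2 := by
    have h' : (∑ j, (μ j + ζ).re ^ 2) - (∑ j, (μ j + ζ).im ^ 2) = 0 := by
      rw [← Finset.sum_sub_distrib]; exact hre
    linarith
  have hu_ne : u ≠ 0 := by
    intro h0
    have hre0 : ∀ j, (μ j + ζ).re = 0 := by
      intro j
      have := congrFun (congrArg (fun (x : EuclideanSpace ℝ (Fin N)) => (x : Fin N → ℝ)) h0) j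
      simpa [hudef] using this
    have him0 : ∀ j, (μ j + ζ).im = 0 := by
      have hsum0 : ∑ j, (μ j + ζ).im ^ 2 = 0 := by
        rw [← hre2]
        exact Finset.sum_eq_zero fun j _ => by rw [hre0 j]; ring
      intro j
      have h1 := (Finset.sum_eq_zero_iff_of_nonneg
        (fun j _ => sq_nonneg ((μ j + ζ).im))).mp hsum0 j (Finset.mem_univ j)
      exact pow_eq_zero_iff two_ne_zero |>.mp h1
    obtain ⟨j, k, hjk⟩ := hne
    apply hjk
    have hj : μ j = -ζ := eq_neg_of_add_eq_zero_left
      (Complex.ext (by simpa using hre0 j) (by simpa using him0 j))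
    have hk : μ k = -ζ := eq_neg_of_add_eq_zero_left
      (Complex.ext (by simpa using hre0 k) (by simpa using him0 k))
    rw [hj, hk]
  set α : ℝ := ‖u‖ with hαdef
  have hα : 0 < α := norm_pos_iff.mpr hu_ne
  have hαne : α ≠ 0 := hα.ne'
  have hαC : (α : ℂ) ≠ 0 := by exact_mod_cast hαne
  have hnormv : ‖v‖ = α := by
    rw [hαdef, EuclideanSpace.norm_eq, EuclideanSpace.norm_eq]
    congr 1
    rw [Finset.sum_congr rfl (fun j _ => by
        simp [hvdef, sq_abs, Real.norm_eq_abs] :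
      ∀ j ∈ Finset.univ, ‖(v : EuclideanSpace ℝ (Fin N)) j‖ ^ 2 = (μ j + ζ).im ^ 2),
      Finset.sum_congr rfl (fun j _ => by
        simp [hudef, sq_abs, Real.norm_eq_abs] :
      ∀ j ∈ Finset.univ, ‖(u : EuclideanSpace ℝ (Fin N)) j‖ ^ 2 = (μ j + ζ).re ^ 2), hre2]
  have key : ∀ t : EuclideanSpace ℝ (Fin N), (∑ i, t i) = 1 →
      (α : ℂ) * (((⟪t, α⁻¹ • u⟫_ℝ : ℝ) : ℂ) +
        ((⟪t, α⁻¹ • v⟫_ℝ : ℝ) : ℂ) * Complex.I) - ζ =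
      ∑ j, (t j : ℂ) * μ j := by
    intro t ht1
    have hiu : ⟪t, α⁻¹ • u⟫_ℝ =
        α⁻¹ * ∑ j, t j * (μ j + ζ).re := by
      rw [real_inner_smul_right, PiLp.inner_apply]
      simp [hudef, RCLike.inner_apply, mul_comm]
    have hiv : ⟪t, α⁻¹ • v⟫_ℝ =
        α⁻¹ * ∑ j, t j * (μ j + ζ).im := by
      rw [real_inner_smul_right, PiLp.inner_apply]
      simp [hvdef, RCLike.inner_apply, mul_comm]
    have hPQ : ((∑ j, t j * (μ j + ζ).re : ℝ) : ℂ) +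
        ((∑ j, t j * (μ j + ζ).im : ℝ) : ℂ) * Complex.I =
        ∑ j, (t j : ℂ) * (μ j + ζ) := by
      push_cast
      rw [Finset.sum_mul, ← Finset.sum_add_distrib]
      refine Finset.sum_congr rfl fun j _ => ?_
      conv_rhs => rw [← Complex.re_add_im (μ j + ζ)]
      ring
    have hsplit : ∑ j, (t j : ℂ) * (μ j + ζ) = (∑ j, (t j : ℂ) * μ j) + ζ := by
      rw [Finset.sum_congr rfl (fun j _ => by ring :
        ∀ j ∈ Finset.univ, (t j : ℂ) * (μ j + ζ) = (t j : ℂ) * μ j + (t j : ℂ) * ζ),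
        Finset.sum_add_distrib, ← Finset.sum_mul]
      have hsc : (∑ j, (t j : ℂ)) = 1 := by
        rw [← Complex.ofReal_sum, ht1, Complex.ofReal_one]
      rw [hsc, one_mul]
    rw [hiu, hiv]
    push_cast
    have hexp : (α : ℂ) * (((α : ℂ))⁻¹ * (∑ j, (t j : ℂ) * ((μ j + ζ).re : ℂ)) +
        ((α : ℂ))⁻¹ * (∑ j, (t j : ℂ) * ((μ j + ζ).im : ℂ)) * Complex.I) =
        (∑ j, (t j : ℂ) * ((μ j + ζ).re : ℂ)) +
        (∑ j, (t j : ℂ) * ((μ j + ζ).im : ℂ)) * Complex.I := by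
      field_simp
    rw [hexp]
    have hPQ' : (∑ j, (t j : ℂ) * ((μ j + ζ).re : ℂ)) +
        (∑ j, (t j : ℂ) * ((μ j + ζ).im : ℂ)) * Complex.I =
        ∑ j, (t j : ℂ) * (μ j + ζ) := by
      rw [← hPQ]; push_cast; ring
    rw [hPQ', hsplit]
    ring
  refine ⟨α⁻¹ • u, α⁻¹ • v, α, ζ, ?_, ?_, ?_, hα, ?_⟩
  · rw [norm_smul, norm_inv, Real.norm_eq_abs, abs_of_pos hα, ← hαdef,
      inv_mul_cancel₀ hαne]
  · rw [norm_smul, norm_inv, Real.norm_eq_abs, abs_of_pos hα, hnormv,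
      inv_mul_cancel₀ hαne]
  · rw [real_inner_smul_left, real_inner_smul_right]
    have huv : ⟪u, v⟫_ℝ = 0 := by
      rw [PiLp.inner_apply]
      simp only [RCLike.inner_apply, conj_trivial]
      simpa [hudef, hvdef, mul_comm] using him
    rw [huv]; ring
  · rw [nr_eq_convex A b μ hbμ]
    ext z
    simp only [Set.mem_setOf_eq, probSimplex]
    constructor
    · rintro ⟨t, ht0, ht1, rfl⟩
      exact ⟨WithLp.toLp 2 t, ⟨ht0, ht1⟩, (key (WithLp.toLp 2 t) ht1).symm⟩
    · rintro ⟨t, ⟨ht0, ht1⟩, rfl⟩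
      exact ⟨t, ht0, ht1, key t ht1⟩
end
end

section
/- Let A be an N×N complex matrix that is not a scalar multiple of the identity. Consider the real vector space of Hermitian N×N matrices with the Hilbert–Schmidt inner product ⟨X, Y⟩ = Tr(XY). Then there exist a rank-2 orthogonal projection π of this space, a real-linear isometry θ from the range of π onto ℂ, a real number α > 0 and a complex number w such that the numerical range satisfies W(A) = {α·θ(π(ρ)) − w : ρ ∈ Q_N}. In other words, W(A) is the image of an orthogonal projection of the set Q_N of density matrices onto a two-plane, followed by a similarity transformation (dilation and translation) of the plane. -/
/-!
STATEMENT 5: For an N×N complex matrix A which is not a scalar multiple of the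
identity, the numerical range W(A) is the image of an orthogonal projection of
the set Q_N of density matrices (in the real space of Hermitian matrices with
the Hilbert–Schmidt inner product ⟨X,Y⟩ = Tr(XY)) onto a two-plane spanned by a
Hilbert–Schmidt orthonormal pair of Hermitian matrices V₁, V₂ (the projection
being ρ ↦ ⟨ρ,V₁⟩V₁ + ⟨ρ,V₂⟩V₂, identified with ℂ via
θ(a₁V₁ + a₂V₂) = a₁ + i·a₂, so θ(π ρ) = Tr(ρV₁) + i·Tr(ρV₂)), followed by a
similarity transformation z ↦ α·z − w with α > 0.
-/

open Matrix
open scoped InnerProductSpace ComplexOrder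

noncomputable section

variable {E : Type*} [NormedAddCommGroup E] [InnerProductSpace ℂ E] [FiniteDimensional ℂ E]

lemma key_seg (T : E →ₗ[ℂ] E) (ψ₁ ψ₂ : E) (h1 : ‖ψ₁‖ = 1) (h2 : ‖ψ₂‖ = 1)
    (hq1 : ⟪ψ₁, T ψ₁⟫_ℂ = 0) (hq2 : ⟪ψ₂, T ψ₂⟫_ℂ = 1) (s : ℝ) (hs : s ∈ Set.Icc (0:ℝ) 1) :
    ∃ ψ : E, ‖ψ‖ = 1 ∧ (s : ℂ) = ⟪ψ, T ψ⟫_ℂ := by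
  classical
  set a : ℂ := ⟪ψ₁, T ψ₂⟫_ℂ with ha
  set b : ℂ := ⟪ψ₂, T ψ₁⟫_ℂ with hb
  set d : ℂ := a - (starRingEnd ℂ) b with hd
  set u : ℂ := if d = 0 then 1 else d / (‖d‖ : ℂ) with hu
  have hu0 : u ≠ 0 := by
    by_cases h : d = 0
    · simp [hu, h]
    · simp only [hu, if_neg h]
      exact div_ne_zero h (by simpa using (norm_ne_zero_iff.mpr h))
  have him : ((starRingEnd ℂ) u * a + u * b).im = 0 := by
    have heq : (starRingEnd ℂ) u * a + u * b
        = (starRingEnd ℂ) u * d + (u * b + (starRingEnd ℂ) (u * b)) := by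
      simp only [hd, mul_sub, _root_.map_mul]; ring
    rw [heq]
    by_cases h : d = 0
    · simp [hu, h, Complex.add_im, Complex.conj_im]
    · have h2' : (starRingEnd ℂ) u * d = ((‖d‖ : ℝ) : ℂ) := by
        simp only [hu, if_neg h]
        rw [map_div₀, Complex.conj_ofReal, div_mul_eq_mul_div, mul_comm, Complex.mul_conj]
        rw [← Complex.sq_norm]
        have : (‖d‖ : ℝ) ≠ 0 := norm_ne_zero_iff.mpr h
        push_cast
        field_simp
      rw [h2']
      simp [Complex.add_im, Complex.conj_im]; ring
  set r : ℝ := ((starRingEnd ℂ) u * a + u * b).re with hr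
  have hcross : (starRingEnd ℂ) u * a + u * b = (r : ℂ) := by
    rw [Complex.ext_iff]; simp [hr, him]
  set φ : E := u • ψ₁ with hφ
  have hφ0 : φ ≠ 0 := by
    simp only [hφ, smul_ne_zero_iff]
    refine ⟨hu0, ?_⟩
    intro h; rw [h] at h1; simp at h1
  have hqφ : ⟪φ, T φ⟫_ℂ = 0 := by
    simp [hφ, inner_smul_left, inner_smul_right, hq1]
  have hc1 : ⟪φ, T ψ₂⟫_ℂ = (starRingEnd ℂ) u * a := by
    simp [hφ, inner_smul_left, ha]; ring
  have hc2 : ⟪ψ₂, T φ⟫_ℂ = u * b := by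
    simp [hφ, inner_smul_right, hb]
  set x : ℝ → E := fun t => (1 - t) • φ + t • ψ₂ with hx
  have hxe : ∀ t : ℝ, x t = ((1-t : ℝ) : ℂ) • φ + ((t:ℝ) : ℂ) • ψ₂ := by
    intro t
    rw [hx]
    simp only
    rw [RCLike.real_smul_eq_coe_smul (K := ℂ) (1-t) φ, RCLike.real_smul_eq_coe_smul (K := ℂ) t ψ₂]
    norm_cast
  have hxne : ∀ t ∈ Set.Icc (0:ℝ) 1, x t ≠ 0 := by
    intro t ht h0
    by_cases h : t = 0
    · subst h; simp [hx] at h0; exact hφ0 h0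
    · have hψe : ((t:ℝ):ℂ) • ψ₂ = -(((1-t:ℝ):ℂ) • φ) := by
        have := hxe t; rw [h0] at this
        linear_combination (norm := module) -this
      have hψ₂ : ψ₂ = (-((1-t:ℝ)/t) : ℂ) • φ := by
        have ht0 : ((t:ℝ):ℂ) ≠ 0 := by exact_mod_cast (Complex.ofReal_ne_zero.mpr h)
        calc ψ₂ = (((t:ℝ):ℂ)⁻¹ * ((t:ℝ):ℂ)) • ψ₂ := by rw [inv_mul_cancel₀ ht0, one_smul]
          _ = ((t:ℝ):ℂ)⁻¹ • (((t:ℝ):ℂ) • ψ₂) := by rw [mul_smul]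
          _ = ((t:ℝ):ℂ)⁻¹ • (-(((1-t:ℝ):ℂ) • φ)) := by rw [hψe]
          _ = (-((1-t:ℝ)/t) : ℂ) • φ := by
              rw [smul_neg, smul_smul, ← neg_smul]; congr 1; push_cast; field_simp
      have : (1 : ℂ) = 0 := by
        rw [← hq2, hψ₂, T.map_smul, inner_smul_left, inner_smul_right, hqφ]
        ring
      exact one_ne_zero this
  have hq : ∀ t : ℝ, ⟪x t, T (x t)⟫_ℂ = ((t^2 + (1-t)*t*r : ℝ) : ℂ) := by
    intro t
    rw [hxe t]
    simp only [LinearMap.map_add, LinearMap.map_smul, inner_add_left, inner_add_right,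
      inner_smul_left, inner_smul_right, Complex.conj_ofReal, hqφ, hq2, hc1, hc2]
    push_cast
    linear_combination ((1-(t:ℂ))*t) * hcross
  -- continuity of the normalized real part
  have hxcont : Continuous x := by
    rw [hx]; fun_prop
  set g : ℝ → ℝ := fun t => (t^2 + (1-t)*t*r) / ‖x t‖^2 with hg
  have hgcont : ContinuousOn g (Set.Icc 0 1) := by
    apply ContinuousOn.div
    · fun_prop
    · fun_prop
    · intro t ht
      exact pow_ne_zero 2 (norm_ne_zero_iff.mpr (hxne t ht))
  have hg0 : g 0 = 0 := by simp [hg]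
  have hg1 : g 1 = 1 := by
    simp [hg, hx, h2]
  have hmem : s ∈ Set.Icc (g 0) (g 1) := by rw [hg0, hg1]; exact hs
  obtain ⟨t, ht, hgt⟩ := intermediate_value_Icc (by norm_num) hgcont hmem
  have hne : ‖x t‖ ≠ 0 := norm_ne_zero_iff.mpr (hxne t ht)
  refine ⟨((‖x t‖⁻¹ : ℝ) : ℂ) • x t, ?_, ?_⟩
  · rw [norm_smul]
    simp [abs_of_nonneg (inv_nonneg.mpr (norm_nonneg (x t))), inv_mul_cancel₀ hne]
  · rw [T.map_smul, inner_smul_left, inner_smul_right, Complex.conj_ofReal, hq t, ← hgt, hg]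
    simp only
    push_cast
    rw [div_eq_mul_inv,
      show (((‖x t‖:ℝ):ℂ)^2)⁻¹ = ((‖x t‖:ℝ):ℂ)⁻¹ * ((‖x t‖:ℝ):ℂ)⁻¹ by rw [pow_two, mul_inv]]
    ring

lemma numrange_convex (T : E →ₗ[ℂ] E) :
    Convex ℝ {z : ℂ | ∃ ψ : E, ‖ψ‖ = 1 ∧ z = ⟪ψ, T ψ⟫_ℂ} := by
  rintro z₁ ⟨ψ₁, h1, rfl⟩ z₂ ⟨ψ₂, h2, rfl⟩ p q hp hq' hpq
  set z₁ := ⟪ψ₁, T ψ₁⟫_ℂ with hz1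
  set z₂ := ⟪ψ₂, T ψ₂⟫_ℂ with hz2
  have hp' : (p:ℂ) + (q:ℂ) = 1 := by exact_mod_cast congrArg (Complex.ofReal) hpq
  by_cases hzz : z₁ = z₂
  · refine ⟨ψ₂, h2, ?_⟩
    rw [hzz, Complex.real_smul, Complex.real_smul]
    linear_combination z₂ * hp'
  · have hc : z₂ - z₁ ≠ 0 := sub_ne_zero.mpr (Ne.symm hzz)
    set T' : E →ₗ[ℂ] E := (z₂ - z₁)⁻¹ • (T - z₁ • LinearMap.id) with hT'
    have hquad : ∀ ψ : E, ‖ψ‖ = 1 → ⟪ψ, T' ψ⟫_ℂ = (z₂ - z₁)⁻¹ * (⟪ψ, T ψ⟫_ℂ - z₁) := by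
      intro ψ hψ
      rw [hT']
      simp only [LinearMap.smul_apply, LinearMap.sub_apply, LinearMap.id_apply,
        inner_smul_right, inner_sub_right]
      rw [inner_self_eq_norm_sq_to_K, hψ]
      norm_num
    have e1 : ⟪ψ₁, T' ψ₁⟫_ℂ = 0 := by rw [hquad ψ₁ h1]; simp [← hz1]
    have e2 : ⟪ψ₂, T' ψ₂⟫_ℂ = 1 := by rw [hquad ψ₂ h2, ← hz2]; field_simp
    obtain ⟨ψ, hψn, hψv⟩ := key_seg T' ψ₁ ψ₂ h1 h2 e1 e2 q ⟨hq', by linarith⟩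
    refine ⟨ψ, hψn, ?_⟩
    rw [hquad ψ hψn] at hψv
    have h3 : (q:ℂ) * (z₂ - z₁) = ⟪ψ, T ψ⟫_ℂ - z₁ := by
      rw [hψv]; field_simp
    rw [Complex.real_smul, Complex.real_smul]
    linear_combination h3 + z₁ * hp'

lemma quad {N : ℕ} (M : Matrix (Fin N) (Fin N) ℂ) (ψ : EuclideanSpace ℂ (Fin N)) :
    ⟪ψ, Matrix.toEuclideanLin M ψ⟫_ℂ =
      ∑ i, ∑ j, (starRingEnd ℂ) (ψ i) * M i j * ψ j := by
  simp [PiLp.inner_apply, RCLike.inner_apply, toEuclideanLin_apply, mulVec, dotProduct,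
    Finset.mul_sum, mul_assoc]
  simp only [Finset.sum_mul]
  refine Finset.sum_congr rfl fun i _ => Finset.sum_congr rfl fun j _ => by ring


lemma trace_diag_mul {N : ℕ} (d : Fin N → ℂ) (M : Matrix (Fin N) (Fin N) ℂ) :
    (diagonal d * M).trace = ∑ i, d i * M i i := by
  simp [Matrix.trace, Matrix.diag, mul_apply, diagonal]

lemma mem_range_of_density {N : ℕ} (A ρ : Matrix (Fin N) (Fin N) ℂ)
    (hpsd : ρ.PosSemidef) (htr : ρ.trace = 1) : (ρ * A).trace ∈ numericalRange A := by
  classical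
  have hH : ρ.IsHermitian := hpsd.1
  set U : Matrix (Fin N) (Fin N) ℂ := (Matrix.IsHermitian.eigenvectorUnitary hH : Matrix (Fin N) (Fin N) ℂ) with hUdef
  set p : Fin N → ℝ := hH.eigenvalues with hpdef
  set D : Matrix (Fin N) (Fin N) ℂ := diagonal (RCLike.ofReal ∘ p) with hDdef
  have hspec : ρ = U * D * star U := Matrix.IsHermitian.spectral_theorem hH
  have hUU : star U * U = 1 := Unitary.coe_star_mul_self (Matrix.IsHermitian.eigenvectorUnitary hH)
  -- sum of eigenvalues is 1
  have htrD : ∑ k, ((p k : ℂ)) = 1 := by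
    have : ρ.trace = D.trace := by
      rw [hspec, trace_mul_cycle, hUU, Matrix.one_mul]
    rw [this] at htr
    rw [← htr, hDdef, trace_diagonal]
    rfl
  have hsum : ∑ k, p k = 1 := by
    have := htrD
    push_cast at this
    exact_mod_cast this
  -- trace as convex combination
  set v : Fin N → EuclideanSpace ℂ (Fin N) := fun k => hH.eigenvectorBasis k with hvdef
  have hnorm : ∀ k, ‖v k‖ = 1 := fun k => hH.eigenvectorBasis.orthonormal.1 k
  have hUv : ∀ i k, U i k = v k i := fun i k => Matrix.IsHermitian.eigenvectorUnitary_apply hH i k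
  have hdiag : ∀ k, (star U * A * U) k k = ⟪v k, Matrix.toEuclideanLin A (v k)⟫_ℂ := by
    intro k
    rw [quad, Matrix.mul_apply]
    simp only [Matrix.mul_apply, Finset.sum_mul]
    rw [Finset.sum_comm]
    refine Finset.sum_congr rfl fun i _ => Finset.sum_congr rfl fun j _ => ?_
    simp only [Matrix.star_apply, hUv, Complex.star_def]
  have hkey : (ρ * A).trace = ∑ k, (p k : ℂ) * ⟪v k, Matrix.toEuclideanLin A (v k)⟫_ℂ := by
    have e1 : ρ * A = (U * D) * (star U * A) := by
      rw [hspec]; simp only [Matrix.mul_assoc]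
    rw [e1, Matrix.trace_mul_comm,
      show (star U * A) * (U * D) = (star U * A * U) * D by simp only [Matrix.mul_assoc],
      Matrix.trace_mul_comm, hDdef, trace_diag_mul]
    apply Finset.sum_congr rfl
    intro k _
    rw [hdiag k]
    rfl
  have hmem := (numrange_convex (Matrix.toEuclideanLin A)).sum_mem (t := Finset.univ)
    (w := p) (z := fun k => ⟪v k, Matrix.toEuclideanLin A (v k)⟫_ℂ)
    (fun k _ => hpsd.eigenvalues_nonneg k) hsum
    (fun k _ => ⟨v k, hnorm k, rfl⟩)
  have h2 : ∑ k, (p k : ℂ) * ⟪v k, Matrix.toEuclideanLin A (v k)⟫_ℂ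
      = ∑ k, p k • ⟪v k, Matrix.toEuclideanLin A (v k)⟫_ℂ := by
    exact Finset.sum_congr rfl fun k _ => Complex.real_smul.symm
  rw [hkey, h2]
  exact hmem

lemma density_of_mem {N : ℕ} (A : Matrix (Fin N) (Fin N) ℂ) {z : ℂ} (hz : z ∈ numericalRange A) :
    ∃ ρ : Matrix (Fin N) (Fin N) ℂ,
      ρ.IsHermitian ∧ ρ.PosSemidef ∧ ρ.trace = 1 ∧ z = (ρ * A).trace := by
  obtain ⟨ψ, hψ, rfl⟩ := hz
  set ρ : Matrix (Fin N) (Fin N) ℂ := Matrix.of (fun i j => ψ i * (starRingEnd ℂ) (ψ j)) with hρ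
  have hherm : ρ.IsHermitian := by
    ext i j
    simp only [Matrix.conjTranspose_apply, hρ, Matrix.of_apply, Complex.star_def,
      _root_.map_mul, Complex.conj_conj]
    ring
  have hsum1 : (∑ i, (starRingEnd ℂ) (ψ i) * ψ i) = (1:ℂ) := by
    have h1 : ⟪ψ, ψ⟫_ℂ = 1 := by
      rw [inner_self_eq_norm_sq_to_K, hψ]; norm_num
    rw [← h1]
    simp only [PiLp.inner_apply, RCLike.inner_apply]
    exact Finset.sum_congr rfl fun i _ => mul_comm _ _
  have hpsd : ρ.PosSemidef := by
    rw [Matrix.posSemidef_iff_dotProduct_mulVec]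
    refine ⟨hherm, ?_⟩
    intro x
    set c : ℂ := ∑ j, (starRingEnd ℂ) (ψ j) * x j with hc
    have hL : dotProduct (star x) (ρ *ᵥ x)
        = ∑ i, ∑ j, (starRingEnd ℂ) (x i) * (ψ i * ((starRingEnd ℂ) (ψ j) * x j)) := by
      simp [dotProduct, mulVec, hρ, Finset.mul_sum, mul_assoc]
    have hR : star c * c
        = ∑ i, ∑ j, (starRingEnd ℂ) ((starRingEnd ℂ) (ψ i) * x i) * ((starRingEnd ℂ) (ψ j) * x j) := by
      rw [hc, Complex.star_def, map_sum, Finset.sum_mul]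
      simp [Finset.mul_sum]
    have heq : dotProduct (star x) (ρ *ᵥ x) = star c * c := by
      rw [hL, hR]
      refine Finset.sum_congr rfl fun i _ => Finset.sum_congr rfl fun j _ => ?_
      simp only [_root_.map_mul, RingHomCompTriple.comp_apply, Complex.conj_conj, RingHom.id_apply]
      ring
    rw [heq]
    exact star_mul_self_nonneg c
  have htr : ρ.trace = 1 := by
    rw [Matrix.trace]
    rw [← hsum1]
    refine Finset.sum_congr rfl fun i _ => ?_
    simp [hρ, Matrix.diag, mul_comm]
  refine ⟨ρ, hherm, hpsd, htr, ?_⟩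
  rw [quad]
  simp only [Matrix.trace, Matrix.diag, Matrix.mul_apply, hρ, Matrix.of_apply]
  rw [Finset.sum_comm]
  refine Finset.sum_congr rfl fun i _ => Finset.sum_congr rfl fun j _ => by ring

-- helper realness lemmas
lemma herm_mul_trace_real {N : ℕ} {X Y : Matrix (Fin N) (Fin N) ℂ}
    (hX : X.IsHermitian) (hY : Y.IsHermitian) :
    (X * Y).trace = (((X * Y).trace).re : ℂ) := by
  have h : (starRingEnd ℂ) (X * Y).trace = (X * Y).trace := by
    have := Matrix.trace_conjTranspose (X * Y)
    rw [Matrix.conjTranspose_mul, hX.eq, hY.eq, Matrix.trace_mul_comm] at this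
    exact this.symm
  exact (Complex.conj_eq_iff_re.mp h).symm

lemma herm_trace_real {N : ℕ} {X : Matrix (Fin N) (Fin N) ℂ} (hX : X.IsHermitian) :
    X.trace = ((X.trace).re : ℂ) := by
  have h : (starRingEnd ℂ) X.trace = X.trace := by
    have := Matrix.trace_conjTranspose X
    rw [hX.eq] at this
    exact this.symm
  exact (Complex.conj_eq_iff_re.mp h).symm

lemma herm_sq_trace {N : ℕ} {X : Matrix (Fin N) (Fin N) ℂ} (hX : X.IsHermitian) :
    (X * X).trace = ((∑ i, ∑ j, Complex.normSq (X i j) : ℝ) : ℂ) := by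
  rw [Matrix.trace]
  push_cast
  simp only [Matrix.diag, Matrix.mul_apply]
  refine Finset.sum_congr rfl fun i _ => Finset.sum_congr rfl fun j _ => ?_
  have hx : X j i = (starRingEnd ℂ) (X i j) := by
    conv_lhs => rw [← hX.eq]
    simp [Matrix.conjTranspose_apply]
  rw [hx, Complex.mul_conj]


theorem stmt_5 {N : ℕ} (A : Matrix (Fin N) (Fin N) ℂ)
    (hA : ∀ c : ℂ, A ≠ c • (1 : Matrix (Fin N) (Fin N) ℂ)) :
    ∃ (V₁ V₂ : Matrix (Fin N) (Fin N) ℂ) (α : ℝ) (w : ℂ),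
      V₁.IsHermitian ∧ V₂.IsHermitian ∧
      (V₁ * V₁).trace = 1 ∧ (V₂ * V₂).trace = 1 ∧ (V₁ * V₂).trace = 0 ∧ 0 < α ∧
      numericalRange A =
        {z | ∃ ρ : Matrix (Fin N) (Fin N) ℂ,
          ρ.IsHermitian ∧ ρ.PosSemidef ∧ ρ.trace = 1 ∧
          z = (α : ℂ) * ((ρ * V₁).trace + (ρ * V₂).trace * Complex.I) - w} := by
  classical
  have hN : N ≠ 0 := by
    rintro rfl
    exact hA 0 (by ext i j; exact i.elim0)
  have hNpos : (0:ℝ) < N := by positivity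
  have hNC : (N : ℂ) ≠ 0 := Nat.cast_ne_zero.mpr hN
  have hNR : (N : ℝ) ≠ 0 := Nat.cast_ne_zero.mpr hN
  have hstar2 : star (2⁻¹ : ℂ) = 2⁻¹ := by
    rw [RCLike.star_def, map_inv₀, map_ofNat]
  have hstarI2 : star (Complex.I / 2) = -(Complex.I / 2) := by
    rw [RCLike.star_def, map_div₀, Complex.conj_I, map_ofNat]; ring
  have hstarR : ∀ r : ℝ, star ((r : ℝ) : ℂ) = ((r : ℝ) : ℂ) := fun r => by
    rw [RCLike.star_def, Complex.conj_ofReal]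
  -- Hermitian parts
  set B : Matrix (Fin N) (Fin N) ℂ := (2⁻¹ : ℂ) • (A + Aᴴ) with hBdef
  set C : Matrix (Fin N) (Fin N) ℂ := (Complex.I / 2) • (Aᴴ - A) with hCdef
  have hB : B.IsHermitian := by
    unfold B
    rw [Matrix.IsHermitian, Matrix.conjTranspose_smul, Matrix.conjTranspose_add,
      Matrix.conjTranspose_conjTranspose, hstar2, add_comm]
  have hC : C.IsHermitian := by
    unfold C
    rw [Matrix.IsHermitian, Matrix.conjTranspose_smul, Matrix.conjTranspose_sub,
      Matrix.conjTranspose_conjTranspose, hstarI2, neg_smul, ← smul_neg, neg_sub]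
  have hBA : A = B + Complex.I • C := by
    unfold B C
    rw [smul_smul]
    rw [show Complex.I * (Complex.I / 2) = -(2⁻¹ : ℂ) by
      rw [← mul_div_assoc, Complex.I_mul_I]; norm_num]
    module
  set β : ℝ := B.trace.re with hβdef
  set γ : ℝ := C.trace.re with hγdef
  have htrB : B.trace = (β : ℂ) := herm_trace_real hB
  have htrC : C.trace = (γ : ℂ) := herm_trace_real hC
  have htrA : A.trace = (β : ℂ) + (γ : ℂ) * Complex.I := by
    rw [hBA, Matrix.trace_add, htrB, Matrix.trace_smul, htrC, smul_eq_mul]; ring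
  -- traceless parts
  set B₀ : Matrix (Fin N) (Fin N) ℂ := B - ((β / N : ℝ) : ℂ) • 1 with hB0def
  set C₀ : Matrix (Fin N) (Fin N) ℂ := C - ((γ / N : ℝ) : ℂ) • 1 with hC0def
  have htr1 : (1 : Matrix (Fin N) (Fin N) ℂ).trace = (N : ℂ) := by
    simp [Matrix.trace_one]
  have hB₀ : B₀.IsHermitian := by
    unfold B₀
    rw [Matrix.IsHermitian, Matrix.conjTranspose_sub, hB.eq, Matrix.conjTranspose_smul,
      hstarR, Matrix.conjTranspose_one]
  have hC₀ : C₀.IsHermitian := by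
    unfold C₀
    rw [Matrix.IsHermitian, Matrix.conjTranspose_sub, hC.eq, Matrix.conjTranspose_smul,
      hstarR, Matrix.conjTranspose_one]
  have htrB₀ : B₀.trace = 0 := by
    unfold B₀
    rw [Matrix.trace_sub, htrB, Matrix.trace_smul, htr1, smul_eq_mul]
    push_cast
    field_simp
    simp
  have htrC₀ : C₀.trace = 0 := by
    unfold C₀
    rw [Matrix.trace_sub, htrC, Matrix.trace_smul, htr1, smul_eq_mul]
    push_cast
    field_simp
    simp
  -- real Frobenius data
  set b : ℝ := ((B₀ * B₀).trace).re with hbdef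
  set c : ℝ := ((C₀ * C₀).trace).re with hcdef
  set d : ℝ := ((B₀ * C₀).trace).re with hddef
  have hbtr : (B₀ * B₀).trace = (b : ℂ) := herm_mul_trace_real hB₀ hB₀
  have hctr : (C₀ * C₀).trace = (c : ℂ) := herm_mul_trace_real hC₀ hC₀
  have hdtr : (B₀ * C₀).trace = (d : ℂ) := herm_mul_trace_real hB₀ hC₀
  have hbsum : b = ∑ i, ∑ j, Complex.normSq (B₀ i j) := by
    have h := herm_sq_trace hB₀
    rw [hbtr] at h
    exact_mod_cast h
  have hcsum : c = ∑ i, ∑ j, Complex.normSq (C₀ i j) := by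
    have h := herm_sq_trace hC₀
    rw [hctr] at h
    exact_mod_cast h
  have hbnn : 0 ≤ b := by
    rw [hbsum]
    exact Finset.sum_nonneg fun i _ => Finset.sum_nonneg fun j _ => Complex.normSq_nonneg _
  have hcnn : 0 ≤ c := by
    rw [hcsum]
    exact Finset.sum_nonneg fun i _ => Finset.sum_nonneg fun j _ => Complex.normSq_nonneg _
  have hbzero : b = 0 → B₀ = 0 := by
    intro h0
    rw [hbsum] at h0
    ext i j
    have h1 := (Finset.sum_eq_zero_iff_of_nonneg (fun i _ =>
      Finset.sum_nonneg fun j _ => Complex.normSq_nonneg (B₀ i j))).mp h0 i (Finset.mem_univ i)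
    have h2 := (Finset.sum_eq_zero_iff_of_nonneg (fun j _ =>
      Complex.normSq_nonneg (B₀ i j))).mp h1 j (Finset.mem_univ j)
    simpa using Complex.normSq_eq_zero.mp h2
  have hczero : c = 0 → C₀ = 0 := by
    intro h0
    rw [hcsum] at h0
    ext i j
    have h1 := (Finset.sum_eq_zero_iff_of_nonneg (fun i _ =>
      Finset.sum_nonneg fun j _ => Complex.normSq_nonneg (C₀ i j))).mp h0 i (Finset.mem_univ i)
    have h2 := (Finset.sum_eq_zero_iff_of_nonneg (fun j _ =>
      Complex.normSq_nonneg (C₀ i j))).mp h1 j (Finset.mem_univ j)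
    simpa using Complex.normSq_eq_zero.mp h2
  -- choose the rotation parameters s, t
  obtain ⟨ζ, hζ⟩ : ∃ ζ : ℂ, ζ ^ 2 = (((c-b)/N : ℝ) : ℂ) + ((-2*d/N : ℝ) : ℂ) * Complex.I :=
    IsAlgClosed.exists_pow_nat_eq _ (by norm_num : 0 < 2)
  set s : ℝ := ζ.re with hsdef
  set t : ℝ := ζ.im with htdef
  have hre := congrArg Complex.re hζ
  have him := congrArg Complex.im hζ
  rw [pow_two] at hre him
  simp only [Complex.mul_re, Complex.mul_im, Complex.add_re, Complex.add_im,
    Complex.I_re, Complex.I_im, Complex.ofReal_re, Complex.ofReal_im,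
    mul_zero, mul_one, zero_mul, zero_sub, sub_zero, zero_add, add_zero] at hre him
  have hst1 : s^2 - t^2 = (c - b)/N := by
    rw [pow_two, pow_two]
    linear_combination hre
  have hst2 : s*t = -d/N := by
    have h : s*t + t*s = -2*d/N := by linear_combination him
    have h2 : -2*d/N = 2*(-d/N) := by ring
    rw [h2] at h
    linarith
  have hstd : s * t * N = -d := by
    rw [hst2]
    field_simp
  have hbal : c + t^2*N = b + s^2*N := by
    have h2 : (s^2 - t^2)*N = c - b := by rw [hst1]; field_simp
    have h3 : s^2*N - t^2*N = c - b := by linear_combination h2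
    linarith
  -- positivity of the scale
  have hsN : 0 ≤ s^2*N := mul_nonneg (sq_nonneg s) hNpos.le
  have htN : 0 ≤ t^2*N := mul_nonneg (sq_nonneg t) hNpos.le
  have halpos : 0 < b + s^2*N := by
    rcases lt_or_eq_of_le (by linarith : (0:ℝ) ≤ b + s^2*N) with h | h
    · exact h
    exfalso
    have hb0 : b = 0 := by linarith
    have hs0 : s^2*N = 0 := by linarith
    have hs0' : s = 0 := by
      rcases mul_eq_zero.mp hs0 with h' | h'
      · exact pow_eq_zero_iff (by norm_num : (2:ℕ) ≠ 0) |>.mp h'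
      · exact absurd h' hNR
    have hc0 : c = 0 := by
      have h1 : c + t^2*N = 0 := by rw [hbal]; linarith
      linarith
    have hB₀0 : B₀ = 0 := hbzero hb0
    have hC₀0 : C₀ = 0 := hczero hc0
    have hBs : B = ((β / N : ℝ) : ℂ) • 1 := by
      have hz := hB₀0
      rw [hB0def] at hz
      linear_combination (norm := module) hz
    have hCs : C = ((γ / N : ℝ) : ℂ) • 1 := by
      have hz := hC₀0
      rw [hC0def] at hz
      linear_combination (norm := module) hz
    apply hA (((β / N : ℝ) : ℂ) + Complex.I * ((γ / N : ℝ) : ℂ))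
    rw [hBA, hBs, hCs, smul_smul, add_smul]
  set α : ℝ := Real.sqrt (b + s^2*N) with hαdef
  have hαpos : 0 < α := Real.sqrt_pos.mpr halpos
  have hαsq : α^2 = b + s^2*N := Real.sq_sqrt (le_of_lt halpos)
  have hαne : (α : ℂ) ≠ 0 := Complex.ofReal_ne_zero.mpr (ne_of_gt hαpos)
  -- the plane
  set V₁ : Matrix (Fin N) (Fin N) ℂ := ((α⁻¹ : ℝ) : ℂ) • (B₀ + ((s:ℝ):ℂ) • 1) with hV1def
  set V₂ : Matrix (Fin N) (Fin N) ℂ := ((α⁻¹ : ℝ) : ℂ) • (C₀ + ((t:ℝ):ℂ) • 1) with hV2def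
  set w : ℂ := ((s:ℝ):ℂ) + ((t:ℝ):ℂ) * Complex.I - A.trace / N with hwdef
  clear_value B C B₀ C₀ V₁ V₂
  have hV₁ : V₁.IsHermitian := by
    rw [hV1def]
    rw [Matrix.IsHermitian, Matrix.conjTranspose_smul, hstarR,
      Matrix.conjTranspose_add, hB₀.eq, Matrix.conjTranspose_smul, hstarR,
      Matrix.conjTranspose_one]
  have hV₂ : V₂.IsHermitian := by
    rw [hV2def]
    rw [Matrix.IsHermitian, Matrix.conjTranspose_smul, hstarR,
      Matrix.conjTranspose_add, hC₀.eq, Matrix.conjTranspose_smul, hstarR,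
      Matrix.conjTranspose_one]
  -- trace computations for V products
  have hprod : ∀ (X Y : Matrix (Fin N) (Fin N) ℂ) (x y : ℝ),
      ((X + ((x:ℝ):ℂ) • 1) * (Y + ((y:ℝ):ℂ) • 1)).trace
        = (X*Y).trace + (y:ℂ) * X.trace + (x:ℂ) * Y.trace + (x:ℂ)*(y:ℂ)*N := by
    intro X Y x y
    simp only [Matrix.add_mul, Matrix.mul_add, Matrix.smul_mul, Matrix.mul_smul,
      Matrix.one_mul, Matrix.mul_one, Matrix.trace_add, Matrix.trace_smul, smul_smul,
      smul_eq_mul, htr1]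
    ring
  have hV11 : (V₁ * V₁).trace = 1 := by
    rw [hV1def]
    rw [Matrix.smul_mul, Matrix.mul_smul, Matrix.trace_smul, Matrix.trace_smul,
      hprod B₀ B₀ s s, hbtr, htrB₀]
    simp only [smul_eq_mul]
    have : ((α⁻¹:ℝ):ℂ) * (((α⁻¹:ℝ):ℂ) * ((b:ℂ) + (s:ℂ)*0 + (s:ℂ)*0 + (s:ℂ)*(s:ℂ)*N)) 
        = (((α⁻¹ * α⁻¹ * (b + s*s*N)) : ℝ) : ℂ) := by push_cast; ring
    rw [this]
    have hr : α⁻¹ * α⁻¹ * (b + s*s*N) = 1 := by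
      have : b + s*s*N = α^2 := by rw [hαsq]; ring
      rw [this]
      field_simp [pow_two]
    rw [hr]
    norm_num
  have hV22 : (V₂ * V₂).trace = 1 := by
    rw [hV2def]
    rw [Matrix.smul_mul, Matrix.mul_smul, Matrix.trace_smul, Matrix.trace_smul,
      hprod C₀ C₀ t t, hctr, htrC₀]
    simp only [smul_eq_mul]
    have : ((α⁻¹:ℝ):ℂ) * (((α⁻¹:ℝ):ℂ) * ((c:ℂ) + (t:ℂ)*0 + (t:ℂ)*0 + (t:ℂ)*(t:ℂ)*N)) 
        = (((α⁻¹ * α⁻¹ * (c + t*t*N)) : ℝ) : ℂ) := by push_cast; ring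
    rw [this]
    have hr : α⁻¹ * α⁻¹ * (c + t*t*N) = 1 := by
      have : c + t*t*N = α^2 := by rw [hαsq, ← hbal]; ring
      rw [this]
      field_simp [pow_two]
    rw [hr]
    norm_num
  have hV12 : (V₁ * V₂).trace = 0 := by
    rw [hV1def, hV2def]
    rw [Matrix.smul_mul, Matrix.mul_smul, Matrix.trace_smul, Matrix.trace_smul,
      hprod B₀ C₀ s t, hdtr, htrB₀, htrC₀]
    simp only [smul_eq_mul]
    have : ((α⁻¹:ℝ):ℂ) * (((α⁻¹:ℝ):ℂ) * ((d:ℂ) + (t:ℂ)*0 + (s:ℂ)*0 + (s:ℂ)*(t:ℂ)*N)) 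
        = (((α⁻¹ * α⁻¹ * (d + s*t*N)) : ℝ) : ℂ) := by push_cast; ring
    rw [this]
    have hr : α⁻¹ * α⁻¹ * (d + s*t*N) = 0 := by rw [hstd]; ring_nf
    rw [hr]
    norm_num
  -- pointwise identity for density matrices
  have hkey : ∀ ρ : Matrix (Fin N) (Fin N) ℂ, ρ.trace = 1 →
      (α : ℂ) * ((ρ * V₁).trace + (ρ * V₂).trace * Complex.I) - w = (ρ * A).trace := by
    intro ρ hρtr
    have h1 : (ρ * V₁).trace = ((α⁻¹:ℝ):ℂ) * ((ρ * B₀).trace + (s:ℂ)) := by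
      rw [hV1def]
      rw [Matrix.mul_smul, Matrix.trace_smul, Matrix.mul_add, Matrix.trace_add,
        Matrix.mul_smul, Matrix.trace_smul, Matrix.mul_one, hρtr]
      simp only [smul_eq_mul]
      ring
    have h2 : (ρ * V₂).trace = ((α⁻¹:ℝ):ℂ) * ((ρ * C₀).trace + (t:ℂ)) := by
      rw [hV2def]
      rw [Matrix.mul_smul, Matrix.trace_smul, Matrix.mul_add, Matrix.trace_add,
        Matrix.mul_smul, Matrix.trace_smul, Matrix.mul_one, hρtr]
      simp only [smul_eq_mul]
      ring
    have h3 : (ρ * B₀).trace = (ρ * B).trace - ((β/N : ℝ):ℂ) := by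
      rw [hB0def]
      rw [Matrix.mul_sub, Matrix.trace_sub, Matrix.mul_smul, Matrix.trace_smul,
        Matrix.mul_one, hρtr]
      simp only [smul_eq_mul]
      ring
    have h4 : (ρ * C₀).trace = (ρ * C).trace - ((γ/N : ℝ):ℂ) := by
      rw [hC0def]
      rw [Matrix.mul_sub, Matrix.trace_sub, Matrix.mul_smul, Matrix.trace_smul,
        Matrix.mul_one, hρtr]
      simp only [smul_eq_mul]
      ring
    have h5 : (ρ * A).trace = (ρ * B).trace + Complex.I * (ρ * C).trace := by
      rw [hBA, Matrix.mul_add, Matrix.trace_add, Matrix.mul_smul, Matrix.trace_smul,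
        smul_eq_mul]
    have hαα : (α:ℂ) * ((α⁻¹:ℝ):ℂ) = 1 := by
      push_cast
      field_simp
    rw [h1, h2, h3, h4, h5, hwdef, htrA]
    have hc1 : ((β/N : ℝ):ℂ) = (β:ℂ)/N := by push_cast; ring
    have hc2 : ((γ/N : ℝ):ℂ) = (γ:ℂ)/N := by push_cast; ring
    rw [hc1, hc2]
    field_simp
    have hαα' : (α:ℂ) * ((1/α:ℝ):ℂ) = 1 := by rw [one_div]; exact hαα
    linear_combination ((ρ * B).trace * N + N * (s:ℂ) + N * (ρ * C).trace * Complex.I + N * (t:ℂ) * Complex.I - (β:ℂ) - (γ:ℂ) * Complex.I) * hαα'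
  refine ⟨V₁, V₂, α, w, hV₁, hV₂, hV11, hV22, hV12, hαpos, ?_⟩
  ext z
  constructor
  · intro hz
    obtain ⟨ρ, hherm, hpsd, htrρ, hz'⟩ := density_of_mem A hz
    exact ⟨ρ, hherm, hpsd, htrρ, by rw [hz', ← hkey ρ htrρ]⟩
  · rintro ⟨ρ, hherm, hpsd, htrρ, rfl⟩
    rw [hkey ρ htrρ]
    exact mem_range_of_density A ρ hpsd htrρ
end
end

section
/- Let A be a 2×2 complex matrix with eigenvalues λ_1, λ_2. Then the numerical range W(A) is the closed elliptical disk (possibly degenerate) with focal points λ_1 and λ_2 and minor axis of length d = √(Tr(AA*) − |λ_1|^2 − |λ_2|^2); equivalently, W(A) = {z ∈ ℂ : |z − λ_1| + |z − λ_2| ≤ √(|λ_1 − λ_2|^2 + d^2)}. -/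
/-!
STATEMENT 12 (Murnaghan's elliptic range theorem): For a 2×2 complex matrix A
with eigenvalues λ₁, λ₂, the numerical range W(A) is the closed elliptical disk
with foci λ₁ and λ₂ and minor axis d = √(Tr(AA*) − |λ₁|² − |λ₂|²):
W(A) = {z : |z−λ₁| + |z−λ₂| ≤ √(|λ₁−λ₂|² + d²)}.
-/

open Matrix
open scoped InnerProductSpace

noncomputable section

open scoped ComplexConjugate

/-! ### Auxiliary real/complex algebra lemmas -/

lemma key_fwd (c β w : ℂ) (x : ℝ) (hcon : x^2 + ‖w‖^2 = 1) :
    (Complex.normSq c + Complex.normSq β) * Complex.normSq (c*x + β*w)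
      - ((conj c) * (c*x + β*w)).re^2
      ≤ (Complex.normSq c + Complex.normSq β) * Complex.normSq β := by
  have hw : Complex.normSq w = 1 - x^2 := by
    rw [← Complex.sq_norm]; linarith
  obtain ⟨c1, c2⟩ := c
  obtain ⟨b1, b2⟩ := β
  obtain ⟨w1, w2⟩ := w
  simp [Complex.normSq_apply, Complex.ext_iff, Complex.add_re, Complex.mul_re,
    Complex.mul_im] at *
  have hw2 : ((c1*c1+c2*c2)*(b1*b1+b2*b2) + (b1*b1+b2*b2)^2)*(w1*w1+w2*w2)
      = ((c1*c1+c2*c2)*(b1*b1+b2*b2) + (b1*b1+b2*b2)^2)*(1-x^2) := by rw [hw]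
  nlinarith [sq_nonneg ((c1*b1+c2*b2)*w1 - (c1*b2-c2*b1)*w2 - (b1^2+b2^2)*x), hw2]

lemma normSq_sub_smul (c z : ℂ) (s : ℝ) :
    Complex.normSq (z - s • c) =
      Complex.normSq z - 2 * s * ((conj c) * z).re + s ^ 2 * Complex.normSq c := by
  obtain ⟨c1, c2⟩ := c
  obtain ⟨z1, z2⟩ := z
  simp [Complex.normSq_apply, Complex.mul_re, Complex.real_smul, Complex.sub_re,
    Complex.sub_im, Complex.mul_im]
  ring

lemma ellipse_of_star (c z : ℂ) (m : ℝ) (hm : 0 ≤ m)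
    (hz : Complex.normSq z ≤ Complex.normSq c + m)
    (hstar : (Complex.normSq c + m) * Complex.normSq z - ((conj c) * z).re ^ 2
      ≤ (Complex.normSq c + m) * m) :
    ‖z - c‖ + ‖z + c‖ ≤ 2 * Real.sqrt (Complex.normSq c + m) := by
  set nc := Complex.normSq c with hnc
  set nz := Complex.normSq z with hnz
  set R := ((conj c) * z).re with hR
  have hnc0 : 0 ≤ nc := Complex.normSq_nonneg c
  have hnz0 : 0 ≤ nz := Complex.normSq_nonneg z
  set a := Real.sqrt (nc + m) with ha
  have ha0 : 0 ≤ a := Real.sqrt_nonneg _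
  have ha2 : a ^ 2 = nc + m := Real.sq_sqrt (by linarith)
  rcases eq_or_lt_of_le ha0 with h0 | hapos
  · have hc0 : nc = 0 := by nlinarith
    have hm0 : m = 0 := by nlinarith
    have hz0 : z = 0 := Complex.normSq_eq_zero.mp (by nlinarith)
    have hcz : c = 0 := Complex.normSq_eq_zero.mp hc0
    simp [hz0, hcz]
    linarith
  · have hR2 : R ^ 2 ≤ nc * nz := by
      have h1 : R ^ 2 ≤ Complex.normSq (conj c * z) := by
        rw [Complex.normSq_apply]; nlinarith [sq_nonneg ((conj c * z).im)]
      calc R ^ 2 ≤ Complex.normSq (conj c * z) := h1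
        _ = nc * nz := by rw [_root_.map_mul, Complex.normSq_conj]
    set t := R / a with hT
    have htA : t * a = R := div_mul_cancel₀ R (ne_of_gt hapos)
    have hdiv2 : nz + nc ≤ a ^ 2 + t ^ 2 := by
      have h3 : a ^ 2 * (nz + nc) ≤ a ^ 2 * a ^ 2 + t ^ 2 * a ^ 2 := by
        have : t ^ 2 * a ^ 2 = R ^ 2 := by rw [← htA]; ring
        nlinarith
      nlinarith
    have hRa : R ^ 2 ≤ (a ^ 2) ^ 2 := by nlinarith
    have hRle : t ≤ a := by
      rw [hT, div_le_iff₀ hapos]; nlinarith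
    have hRge : -a ≤ t := by
      rw [hT, le_div_iff₀ hapos]; nlinarith
    have key : ∀ s : ℝ, s = 1 ∨ s = -1 →
        ‖z - s • c‖ ≤ a - s * t := by
      intro s hs
      have hs2 : s ^ 2 = 1 := by rcases hs with h | h <;> simp [h]
      have hsq : Complex.normSq (z - s • c) ≤ (a - s * t) ^ 2 := by
        rw [normSq_sub_smul, ← hR, ← hnc, ← hnz, hs2]
        have e2 : (a - s * t) ^ 2 = a ^ 2 - 2 * s * (t * a) + s ^ 2 * t ^ 2 := by ring
        rw [e2, htA, hs2]
        linarith
      have hpos : 0 ≤ a - s * t := by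
        rcases hs with h | h <;> rw [h] <;> nlinarith
      calc ‖z - s • c‖ = Real.sqrt (Complex.normSq (z - s • c)) :=
            Complex.norm_def _
        _ ≤ Real.sqrt ((a - s * t) ^ 2) := Real.sqrt_le_sqrt hsq
        _ = a - s * t := by rw [Real.sqrt_sq hpos]
    have h1 := key 1 (Or.inl rfl)
    have h2 := key (-1) (Or.inr rfl)
    rw [one_smul] at h1
    rw [neg_smul, one_smul, sub_neg_eq_add] at h2
    linarith

lemma star_of_ellipse (c z : ℂ) (m : ℝ) (hm : 0 ≤ m)
    (h : ‖z - c‖ + ‖z + c‖ ≤ 2 * Real.sqrt (Complex.normSq c + m)) :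
    (Complex.normSq c + m) * Complex.normSq z - ((conj c) * z).re ^ 2
      ≤ (Complex.normSq c + m) * m ∧ Complex.normSq z ≤ Complex.normSq c + m := by
  set nc := Complex.normSq c with hnc
  set nz := Complex.normSq z with hnz
  set R := ((conj c) * z).re with hR
  have hnc0 : 0 ≤ nc := Complex.normSq_nonneg c
  have hnz0 : 0 ≤ nz := Complex.normSq_nonneg z
  set a := Real.sqrt (nc + m) with ha
  have ha0 : 0 ≤ a := Real.sqrt_nonneg _
  have ha2 : a ^ 2 = nc + m := Real.sq_sqrt (by linarith)
  set s := ‖z - c‖ with hs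
  set t := ‖z + c‖ with ht
  have hs0 : 0 ≤ s := norm_nonneg _
  have ht0 : 0 ≤ t := norm_nonneg _
  have hs2 : s ^ 2 = nz - 2 * R + nc := by
    rw [hs, Complex.sq_norm, show z - c = z - (1:ℝ) • c by simp, normSq_sub_smul]
    ring
  have ht2 : t ^ 2 = nz + 2 * R + nc := by
    rw [ht, Complex.sq_norm, show z + c = z - (-1:ℝ) • c by simp, normSq_sub_smul]
    ring
  have hzle : nz ≤ a ^ 2 := by
    have h2z : ‖2 * z‖ ≤ s + t := by
      calc ‖2 * z‖ = ‖(z - c) + (z + c)‖ := by ring_nf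
        _ ≤ s + t := norm_add_le _ _
    have : ‖2 * z‖ = 2 * ‖z‖ := by
      rw [norm_mul]; simp
    rw [this] at h2z
    have habz : ‖z‖ ≤ a := by linarith
    calc nz = ‖z‖ ^ 2 := (Complex.sq_norm z).symm
      _ ≤ a ^ 2 := by nlinarith [norm_nonneg z]
  refine ⟨?_, by linarith⟩
  have hsum2 : (s + t) ^ 2 ≤ (2 * a) ^ 2 := by nlinarith
  have hP : nz + nc ≤ 2 * a ^ 2 := by nlinarith [sq_nonneg (s - t)]
  have hst : s * t ≤ 2 * a ^ 2 - (nz + nc) := by nlinarith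
  have hst2 : (s * t) ^ 2 = (nz + nc) ^ 2 - 4 * R ^ 2 := by
    rw [mul_pow, hs2, ht2]; ring
  have hst0 : 0 ≤ s * t := mul_nonneg hs0 ht0
  nlinarith [sq_nonneg (s * t), hst, hst2, hst0, ha2]

lemma real_construct (γ δ X Y : ℝ) (hγ : 0 < γ) (hδ : 0 < δ)
    (hkey : δ ^ 2 * X ^ 2 + (γ ^ 2 + δ ^ 2) * Y ^ 2 ≤ (γ ^ 2 + δ ^ 2) * δ ^ 2) :
    ∃ x u v : ℝ, x ^ 2 + u ^ 2 + v ^ 2 = 1 ∧ γ * x + δ * u = X ∧ δ * v = Y := by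
  set a2 := γ ^ 2 + δ ^ 2 with ha2
  have ha2pos : 0 < a2 := by positivity
  set v := Y / δ with hv
  have hvδ : δ * v = Y := mul_div_cancel₀ Y (ne_of_gt hδ)
  have hY2 : Y ^ 2 ≤ δ ^ 2 := by nlinarith [sq_nonneg X, sq_nonneg Y]
  have hv2 : v ^ 2 ≤ 1 := by
    rw [hv, div_pow, div_le_one (by positivity)]
    exact hY2
  have hX2r : X ^ 2 ≤ a2 * (1 - v ^ 2) := by
    have e : a2 * (1 - v ^ 2) * δ ^ 2 = a2 * δ ^ 2 - a2 * (δ * v) ^ 2 := by ring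
    have h7 : X ^ 2 * δ ^ 2 ≤ a2 * (1 - v ^ 2) * δ ^ 2 := by
      rw [e, hvδ]
      nlinarith [hkey]
    exact le_of_mul_le_mul_right h7 (pow_pos hδ 2)
  set s := Real.sqrt (a2 * (1 - v ^ 2) - X ^ 2) with hs
  have hs2 : s ^ 2 = a2 * (1 - v ^ 2) - X ^ 2 := Real.sq_sqrt (by linarith)
  refine ⟨(γ * X + δ * s) / a2, (δ * X - γ * s) / a2, v, ?_, ?_, hvδ⟩
  · field_simp
    linear_combination (X ^ 2 + s ^ 2) * ha2.symm + a2 * hs2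
  · field_simp
    linear_combination X * ha2

lemma normSq_pos_of_ne {u : ℂ} (hu : u ≠ 0) : 0 < Complex.normSq u :=
  Complex.normSq_pos.mpr hu

lemma exists_param_czero (β z : ℂ) (hz : Complex.normSq z ≤ Complex.normSq β) :
    ∃ x : ℝ, ∃ w : ℂ, x ^ 2 + ‖w‖ ^ 2 = 1 ∧ z = 0 * x + β * w := by
  by_cases hβ : β = 0
  · have hz0 : z = 0 := by
      apply Complex.normSq_eq_zero.mp
      have := Complex.normSq_nonneg z
      simp [hβ] at hz
      linarith
    exact ⟨1, 0, by norm_num, by simp [hz0]⟩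
  · have hβpos : 0 < Complex.normSq β := normSq_pos_of_ne hβ
    refine ⟨Real.sqrt (1 - Complex.normSq z / Complex.normSq β), z / β, ?_, ?_⟩
    · have h1 : Complex.normSq z / Complex.normSq β ≤ 1 := by
        rw [div_le_one hβpos]; exact hz
      have h2 : (0:ℝ) ≤ 1 - Complex.normSq z / Complex.normSq β := by linarith
      rw [Real.sq_sqrt h2, Complex.sq_norm, map_div₀]
      field_simp
      ring
    · field_simp
      simp

lemma exists_param (c β z : ℂ)
    (hstar : (Complex.normSq c + Complex.normSq β) * Complex.normSq z
      - ((conj c) * z).re ^ 2 ≤ (Complex.normSq c + Complex.normSq β) * Complex.normSq β)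
    (hz : Complex.normSq z ≤ Complex.normSq c + Complex.normSq β) :
    ∃ x : ℝ, ∃ w : ℂ, x ^ 2 + ‖w‖ ^ 2 = 1 ∧ z = c * x + β * w := by
  by_cases hc : c = 0
  · subst hc
    apply exists_param_czero
    simpa using hz
  · set nc := Complex.normSq c with hnc
    set nβ := Complex.normSq β with hnβ
    set nz := Complex.normSq z with hnz
    have hnc0 : 0 < nc := normSq_pos_of_ne hc
    have hnβ0 : 0 ≤ nβ := Complex.normSq_nonneg β
    have hnz0 : 0 ≤ nz := Complex.normSq_nonneg z
    set γ := Real.sqrt nc with hγ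
    have hγpos : 0 < γ := Real.sqrt_pos.mpr hnc0
    have hγ2 : γ ^ 2 = nc := Real.sq_sqrt hnc0.le
    have hγC : (γ:ℂ) ≠ 0 := by
      simp only [ne_eq, Complex.ofReal_eq_zero]
      exact ne_of_gt hγpos
    set R := ((conj c) * z).re with hR
    set I := ((conj c) * z).im with hI
    have hRI : R ^ 2 + I ^ 2 = nc * nz := by
      have h5 : Complex.normSq (conj c * z) = nc * nz := by
        rw [_root_.map_mul, Complex.normSq_conj]
      rw [Complex.normSq_apply] at h5
      nlinarith [h5]
    set X := R / γ with hX
    set Y := I / γ with hY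
    have hXγ : X * γ = R := div_mul_cancel₀ R (ne_of_gt hγpos)
    have hYγ : Y * γ = I := div_mul_cancel₀ I (ne_of_gt hγpos)
    have hXY : X ^ 2 + Y ^ 2 = nz := by
      have h4 : (X ^ 2 + Y ^ 2) * nc = nz * nc := by
        have e : (X ^ 2 + Y ^ 2) * nc = (X * γ)^2 + (Y * γ)^2 := by
          rw [← hγ2]; ring
        rw [e, hXγ, hYγ]; linarith [hRI]
      exact mul_right_cancel₀ (ne_of_gt hnc0) h4
    have hkey : nβ * X ^ 2 + (nc + nβ) * Y ^ 2 ≤ (nc + nβ) * nβ := by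
      have hR2 : R ^ 2 = nc * X ^ 2 := by rw [← hXγ, ← hγ2]; ring
      nlinarith [hstar, hXY]
    have hwz : (Complex.ofReal R + Complex.ofReal I * Complex.I) = conj c * z := by
      apply Complex.ext <;> simp [hR, hI]
    have hcz : c * (conj c * z) = (Complex.ofReal nc) * z := by
      rw [← mul_assoc, Complex.mul_conj]
    have hncC : (Complex.ofReal nc) ≠ 0 := by
      simp only [ne_eq, Complex.ofReal_eq_zero]
      exact ne_of_gt hnc0
    by_cases hβ : β = 0
    · have hnβ0' : nβ = 0 := by rw [hnβ, hβ]; simp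
      have hY0 : Y = 0 := by
        have h8 : Y ^ 2 ≤ 0 := by nlinarith [hkey, sq_nonneg X]
        have h9 : Y ^ 2 = 0 := le_antisymm h8 (sq_nonneg Y)
        exact pow_eq_zero_iff (two_ne_zero).elim |>.mp h9
      set lam := X / γ with hlam
      have hlamγ : lam * γ = X := div_mul_cancel₀ X (ne_of_gt hγpos)
      have hlam2 : lam ^ 2 ≤ 1 := by
        have hX2 : X ^ 2 ≤ nc := by
          rw [← hXY, hY0] at hz
          simp at hz
          linarith [hz, hnβ0']
        rw [hlam, div_pow, div_le_one (by positivity), hγ2]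
        exact hX2
      refine ⟨lam, Complex.ofReal (Real.sqrt (1 - lam ^ 2)), ?_, ?_⟩
      · rw [Complex.norm_real, Real.norm_eq_abs, sq_abs, Real.sq_sqrt (by linarith)]
        ring
      · rw [hβ, zero_mul, add_zero]
        apply mul_right_cancel₀ hncC
        have hlamnc : lam * nc = R := by
          rw [← hXγ, ← hlamγ, ← hγ2]; ring
        have hIzero : (Complex.ofReal I) = 0 := by
          rw [← hYγ, hY0]; simp
        calc z * (Complex.ofReal nc)
            = c * (conj c * z) := by rw [hcz]; ring
          _ = c * (Complex.ofReal R + Complex.ofReal I * Complex.I) := by rw [hwz]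
          _ = c * Complex.ofReal (lam * nc) := by rw [hIzero, hlamnc]; ring
          _ = c * Complex.ofReal lam * Complex.ofReal nc := by
              push_cast; ring
    · have hβpos : 0 < nβ := normSq_pos_of_ne hβ
      have hδpos : 0 < Real.sqrt nβ := Real.sqrt_pos.mpr hβpos
      have hδ2 : (Real.sqrt nβ) ^ 2 = nβ := Real.sq_sqrt hβpos.le
      obtain ⟨x, u, v, hsum, hxu, hvY⟩ :=
        real_construct γ (Real.sqrt nβ) X Y hγpos hδpos
          (by rw [hγ2, hδ2]; nlinarith [hkey])
      set δ := Real.sqrt nβ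
      have hδC : (δ:ℂ) ≠ 0 := by
        simp only [ne_eq, Complex.ofReal_eq_zero]
        exact ne_of_gt hδpos
      refine ⟨x, (Complex.ofReal u + Complex.ofReal v * Complex.I) * c * δ / (γ * β),
        ?_, ?_⟩
      · rw [Complex.sq_norm, map_div₀, _root_.map_mul, _root_.map_mul, Complex.normSq_mul]
        rw [Complex.normSq_add_mul_I, Complex.normSq_ofReal, Complex.normSq_ofReal,
          ← hnc, ← hnβ]
        rw [show Real.sqrt nβ * Real.sqrt nβ = nβ by rw [← sq]; exact hδ2]
        rw [show γ * γ = nc by rw [← sq]; exact hγ2]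
        field_simp
        linear_combination hsum
      · apply mul_right_cancel₀ hγC
        apply mul_right_cancel₀ hγC
        have e1 : β * ((Complex.ofReal u + Complex.ofReal v * Complex.I) * c * δ / (γ * β))
            = (Complex.ofReal u + Complex.ofReal v * Complex.I) * c * δ / γ := by
          field_simp
        have hxuC : (γ:ℂ) * x + δ * u = (X:ℂ) := by exact_mod_cast congrArg Complex.ofReal hxu
        have hvYC : (δ:ℂ) * v = (Y:ℂ) := by exact_mod_cast congrArg Complex.ofReal hvY
        have hXC : (X:ℂ) * γ = (R:ℂ) := by exact_mod_cast congrArg Complex.ofReal hXγ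
        have hYC : (Y:ℂ) * γ = (I:ℂ) := by exact_mod_cast congrArg Complex.ofReal hYγ
        have hγ2C : (γ:ℂ) * γ = (nc:ℂ) := by
          rw [show ((nc:ℝ):ℂ) = ((γ^2 : ℝ):ℂ) by rw [hγ2]]
          push_cast; ring
        calc z * γ * γ = (Complex.ofReal nc) * z := by rw [← hγ2C]; ring
          _ = c * (conj c * z) := hcz.symm
          _ = c * (Complex.ofReal R + Complex.ofReal I * Complex.I) := by rw [hwz]
          _ = c * ((Complex.ofReal X) * γ + ((Complex.ofReal Y) * γ) * Complex.I) := by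
              rw [hXC, hYC]
          _ = c * ((γ * x + δ * u) * γ + ((δ * v) * γ) * Complex.I) := by
              rw [hxuC, hvYC]
          _ = (c * x + (Complex.ofReal u + Complex.ofReal v * Complex.I) * c * δ / γ) * γ * γ
              := by field_simp; ring
          _ = (c * x + β * ((Complex.ofReal u + Complex.ofReal v * Complex.I) * c * δ / (γ * β)))
              * γ * γ := by rw [e1]

/-- The core equivalence: the parametrized set equals the elliptical disk. -/
lemma core_iff (c β z : ℂ) :
    (∃ x : ℝ, ∃ w : ℂ, x ^ 2 + ‖w‖ ^ 2 = 1 ∧ z = c * x + β * w)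
      ↔ ‖z - c‖ + ‖z + c‖
          ≤ 2 * Real.sqrt (Complex.normSq c + Complex.normSq β) := by
  constructor
  · rintro ⟨x, w, hcon, rfl⟩
    have hzn : Complex.normSq (c * x + β * w) ≤ Complex.normSq c + Complex.normSq β := by
      have h1 : ‖c * x + β * w‖
          ≤ ‖c‖ * |x| + ‖β‖ * ‖w‖ := by
        calc ‖c * x + β * w‖
            ≤ ‖c * x‖ + ‖β * w‖ := norm_add_le _ _
          _ = ‖c‖ * |x| + ‖β‖ * ‖w‖ := by
              rw [norm_mul, norm_mul, Complex.norm_real, Real.norm_eq_abs]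
      have h2 : (‖c‖ * |x| + ‖β‖ * ‖w‖) ^ 2
          ≤ Complex.normSq c + Complex.normSq β := by
        nlinarith [sq_nonneg (‖c‖ * ‖w‖ - ‖β‖ * |x|),
          Complex.sq_norm c, Complex.sq_norm β, Complex.sq_norm w, sq_abs x, hcon,
          norm_nonneg c, norm_nonneg β, norm_nonneg w, abs_nonneg x]
      calc Complex.normSq (c * x + β * w) = ‖c * x + β * w‖ ^ 2 :=
            (Complex.sq_norm _).symm
        _ ≤ (‖c‖ * |x| + ‖β‖ * ‖w‖) ^ 2 := by
            nlinarith [norm_nonneg (c * x + β * w)]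
        _ ≤ Complex.normSq c + Complex.normSq β := h2
    exact ellipse_of_star _ _ _ (Complex.normSq_nonneg β) hzn (key_fwd c β w x hcon)
  · intro h
    obtain ⟨hstar, hz⟩ := star_of_ellipse c z (Complex.normSq β) (Complex.normSq_nonneg β) h
    exact exists_param c β z hstar hz

/-- Parseval-type identity for a 2×2 unitary change of coordinates. -/
lemma parseval2 (a g F G : ℂ) (hD : (conj a) * a + (conj g) * g = 1) :
    Complex.normSq ((conj a) * F + (conj g) * G) + Complex.normSq (-g * F + a * G)
      = Complex.normSq F + Complex.normSq G := by
  have hC : ((Complex.normSq ((conj a) * F + (conj g) * G)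
      + Complex.normSq (-g * F + a * G) : ℝ) : ℂ)
      = ((Complex.normSq F + Complex.normSq G : ℝ) : ℂ) := by
    push_cast
    rw [Complex.normSq_eq_conj_mul_self, Complex.normSq_eq_conj_mul_self,
      Complex.normSq_eq_conj_mul_self, Complex.normSq_eq_conj_mul_self]
    simp only [map_add, _root_.map_mul, map_neg, Complex.conj_conj]
    linear_combination (conj F * F + conj G * G) * hD
  exact_mod_cast hC

/-- Master value identity: expansion of the quadratic form in the eigenbasis. -/
lemma master_val (A00 A01 A10 A11 lam α γc ψ0 ψ1 : ℂ)
    (hD : conj α * α + conj γc * γc = 1)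
    (hE0 : A00 * α + A01 * γc = lam * α) (hE1 : A10 * α + A11 * γc = lam * γc) :
    conj ψ0 * (A00 * ψ0 + A01 * ψ1) + conj ψ1 * (A10 * ψ0 + A11 * ψ1)
      = lam * (conj (conj α * ψ0 + conj γc * ψ1) * (conj α * ψ0 + conj γc * ψ1))
        + (-γc * (-A00 * conj γc + A01 * conj α) + α * (-A10 * conj γc + A11 * conj α))
            * (conj (-γc * ψ0 + α * ψ1) * (-γc * ψ0 + α * ψ1))
        + (conj α * (-A00 * conj γc + A01 * conj α) + conj γc * (-A10 * conj γc + A11 * conj α))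
            * (conj (conj α * ψ0 + conj γc * ψ1) * (-γc * ψ0 + α * ψ1)) := by
  set p := conj α * ψ0 + conj γc * ψ1 with hp
  set q := -γc * ψ0 + α * ψ1 with hq
  have hψ0 : ψ0 = α * p - conj γc * q := by
    rw [hp, hq]; linear_combination (-ψ0) * hD
  have hψ1 : ψ1 = γc * p + conj α * q := by
    rw [hp, hq]; linear_combination (-ψ1) * hD
  have hcψ0 : conj ψ0 = conj α * conj p - γc * conj q := by
    have := congrArg (starRingEnd ℂ) hψ0
    simpa [map_sub, _root_.map_mul, Complex.conj_conj] using this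
  have hcψ1 : conj ψ1 = conj γc * conj p + α * conj q := by
    have := congrArg (starRingEnd ℂ) hψ1
    simpa [map_add, _root_.map_mul, Complex.conj_conj] using this
  rw [hcψ0, hcψ1, hψ0, hψ1]
  linear_combination (conj p * p) * (conj α * hE0 + conj γc * hE1 + lam * hD)
    + (conj q * p) * (α * hE1 - γc * hE0)

/-- Membership in the numerical range in coordinates. -/
lemma nr_mem (A : Matrix (Fin 2) (Fin 2) ℂ) (z : ℂ) :
    z ∈ numericalRange A ↔ ∃ p q : ℂ, Complex.normSq p + Complex.normSq q = 1 ∧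
      z = conj p * (A 0 0 * p + A 0 1 * q) + conj q * (A 1 0 * p + A 1 1 * q) := by
  constructor
  · rintro ⟨ψ, hψ, rfl⟩
    refine ⟨ψ 0, ψ 1, ?_, ?_⟩
    · have h1 := hψ
      rw [EuclideanSpace.norm_eq] at h1
      have h2 : Real.sqrt (∑ i : Fin 2, ‖ψ i‖ ^ 2) = 1 := h1
      rw [Fin.sum_univ_two] at h2
      have h3 : ‖ψ 0‖ ^ 2 + ‖ψ 1‖ ^ 2 = 1 := by
        nlinarith [Real.sq_sqrt (by positivity : (0:ℝ) ≤ ‖ψ 0‖^2 + ‖ψ 1‖^2), sq_nonneg (‖ψ 0‖)]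
      simpa [Complex.normSq_eq_norm_sq] using h3
    · simp [PiLp.inner_apply, Matrix.toEuclideanLin_apply, Fin.sum_univ_two, Matrix.mulVec,
        dotProduct, mul_comm, mul_add]
  · rintro ⟨p, q, h1, rfl⟩
    refine ⟨(WithLp.equiv 2 _).symm ![p, q], ?_, ?_⟩
    · rw [EuclideanSpace.norm_eq]
      simp [Fin.sum_univ_two]
      rw [show ‖p‖ ^ 2 + ‖q‖ ^ 2 = 1 by
        simpa [Complex.sq_norm] using h1]
    · simp [PiLp.inner_apply, Matrix.toEuclideanLin_apply, Fin.sum_univ_two, Matrix.mulVec,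
        dotProduct, mul_comm, mul_add]

theorem stmt_12 (A : Matrix (Fin 2) (Fin 2) ℂ) (lam₁ lam₂ : ℂ)
    (hspec : A.charpoly =
      (Polynomial.X - Polynomial.C lam₁) * (Polynomial.X - Polynomial.C lam₂)) :
    numericalRange A =
      {z : ℂ | ‖z - lam₁‖ + ‖z - lam₂‖ ≤
        Real.sqrt (‖lam₁ - lam₂‖ ^ 2 +
          ((A * Aᴴ).trace.re - ‖lam₁‖ ^ 2 - ‖lam₂‖ ^ 2))} := by
  -- trace and determinant from the characteristic polynomial
  have hexp : (Polynomial.X - Polynomial.C lam₁) * (Polynomial.X - Polynomial.C lam₂)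
      = Polynomial.X ^ 2 - Polynomial.C (lam₁ + lam₂) * Polynomial.X
        + Polynomial.C (lam₁ * lam₂) := by
    rw [map_add, _root_.map_mul]
    ring
  have htr : A 0 0 + A 1 1 = lam₁ + lam₂ := by
    have h := Matrix.trace_eq_neg_charpoly_coeff A
    rw [hspec, hexp, Matrix.trace_fin_two] at h
    simpa [Polynomial.coeff_add, Polynomial.coeff_sub, Polynomial.coeff_C_mul,
      Polynomial.coeff_X_pow, Polynomial.coeff_C] using h
  have hdet : A 0 0 * A 1 1 - A 0 1 * A 1 0 = lam₁ * lam₂ := by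
    have h := Matrix.det_eq_sign_charpoly_coeff A
    rw [hspec, hexp, Matrix.det_fin_two] at h
    simpa [Polynomial.coeff_add, Polynomial.coeff_sub, Polynomial.coeff_C_mul,
      Polynomial.coeff_X_pow, Polynomial.coeff_C] using h
  -- an eigenvector for lam₁
  have hdetB : (A - lam₁ • 1).det = 0 := by
    rw [Matrix.det_fin_two]
    simp only [Matrix.sub_apply, Matrix.smul_apply, Matrix.one_apply, smul_eq_mul]
    norm_num
    linear_combination hdet - lam₁ * htr
  obtain ⟨v, hvne, hveq⟩ := (Matrix.exists_mulVec_eq_zero_iff.mpr hdetB)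
  have hv0 : (A 0 0 - lam₁) * v 0 + A 0 1 * v 1 = 0 := by
    have h := congrFun hveq 0
    simpa [Matrix.mulVec, dotProduct, Fin.sum_univ_two, Matrix.sub_apply,
      Matrix.smul_apply, Matrix.one_apply] using h
  have hv1 : A 1 0 * v 0 + (A 1 1 - lam₁) * v 1 = 0 := by
    have h := congrFun hveq 1
    simpa [Matrix.mulVec, dotProduct, Fin.sum_univ_two, Matrix.sub_apply,
      Matrix.smul_apply, Matrix.one_apply] using h
  -- normalize
  have hvpos : 0 < Complex.normSq (v 0) + Complex.normSq (v 1) := by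
    have hkey : v 0 ≠ 0 ∨ v 1 ≠ 0 := by
      by_contra hcon
      push_neg at hcon
      exact hvne (funext fun i => by fin_cases i <;> simp [hcon.1, hcon.2])
    rcases hkey with h | h
    · have := normSq_pos_of_ne h
      have := Complex.normSq_nonneg (v 1)
      linarith
    · have := normSq_pos_of_ne h
      have := Complex.normSq_nonneg (v 0)
      linarith
  set n := Real.sqrt (Complex.normSq (v 0) + Complex.normSq (v 1)) with hn
  have hnpos : 0 < n := Real.sqrt_pos.mpr hvpos
  have hn2 : n ^ 2 = Complex.normSq (v 0) + Complex.normSq (v 1) := Real.sq_sqrt hvpos.le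
  have hnC : (n:ℂ) ≠ 0 := Complex.ofReal_ne_zero.mpr (ne_of_gt hnpos)
  set α := v 0 / (n:ℂ) with hα
  set γc := v 1 / (n:ℂ) with hγc
  have hDr : Complex.normSq α + Complex.normSq γc = 1 := by
    rw [hα, hγc, Complex.normSq_div, Complex.normSq_div, Complex.normSq_ofReal]
    rw [← add_div, div_eq_one_iff_eq (by nlinarith)]
    nlinarith [hn2]
  have hD : conj α * α + conj γc * γc = 1 := by
    rw [← Complex.normSq_eq_conj_mul_self, ← Complex.normSq_eq_conj_mul_self]
    exact_mod_cast congrArg Complex.ofReal hDr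
  have hE0 : A 0 0 * α + A 0 1 * γc = lam₁ * α := by
    rw [hα, hγc]
    field_simp
    linear_combination hv0
  have hE1 : A 1 0 * α + A 1 1 * γc = lam₁ * γc := by
    rw [hα, hγc]
    field_simp
    linear_combination hv1
  clear hv0 hv1 hveq hvne hn2 hnC hnpos hn hvpos hα hγc hdetB hdet
  -- define the off-diagonal and second diagonal entries in the Schur basis
  set b := conj α * (-A 0 0 * conj γc + A 0 1 * conj α)
    + conj γc * (-A 1 0 * conj γc + A 1 1 * conj α) with hbdef
  set μ := -γc * (-A 0 0 * conj γc + A 0 1 * conj α)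
    + α * (-A 1 0 * conj γc + A 1 1 * conj α) with hμdef
  have hμ : μ = lam₂ := by
    rw [hμdef]
    linear_combination htr + (A 0 0 + A 1 1 - lam₁) * hD - conj α * hE0 - conj γc * hE1
  -- the trace of A Aᴴ
  have htrAA : (A * Aᴴ).trace.re = Complex.normSq (A 0 0) + Complex.normSq (A 0 1)
      + Complex.normSq (A 1 0) + Complex.normSq (A 1 1) := by
    rw [Matrix.trace_fin_two]
    simp only [Matrix.mul_apply, Matrix.conjTranspose_apply, Fin.sum_univ_two,
      RCLike.star_def, Complex.add_re, Complex.mul_conj, Complex.ofReal_re]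
    ring
  have hb2 : Complex.normSq lam₁ + Complex.normSq b + Complex.normSq μ
      = (A * Aᴴ).trace.re := by
    have hrow0 : Complex.normSq (lam₁ * α)
        + Complex.normSq (-A 0 0 * conj γc + A 0 1 * conj α)
        = Complex.normSq (A 0 0) + Complex.normSq (A 0 1) := by
      have h := parseval2 (conj α) (conj γc) (A 0 0) (A 0 1)
        (by simp only [Complex.conj_conj]; linear_combination hD)
      simp only [Complex.conj_conj] at h
      rw [show α * A 0 0 + γc * A 0 1 = lam₁ * α from by linear_combination hE0,
        show -(conj γc) * A 0 0 + conj α * A 0 1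
          = -A 0 0 * conj γc + A 0 1 * conj α from by ring] at h
      exact h
    have hrow1 : Complex.normSq (lam₁ * γc)
        + Complex.normSq (-A 1 0 * conj γc + A 1 1 * conj α)
        = Complex.normSq (A 1 0) + Complex.normSq (A 1 1) := by
      have h := parseval2 (conj α) (conj γc) (A 1 0) (A 1 1)
        (by simp only [Complex.conj_conj]; linear_combination hD)
      simp only [Complex.conj_conj] at h
      rw [show α * A 1 0 + γc * A 1 1 = lam₁ * γc from by linear_combination hE1,
        show -(conj γc) * A 1 0 + conj α * A 1 1
          = -A 1 0 * conj γc + A 1 1 * conj α from by ring] at h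
      exact h
    have hcol := parseval2 α γc (-A 0 0 * conj γc + A 0 1 * conj α)
      (-A 1 0 * conj γc + A 1 1 * conj α) hD
    rw [← hbdef, ← hμdef] at hcol
    rw [htrAA]
    have e0 : Complex.normSq (lam₁ * α) = Complex.normSq lam₁ * Complex.normSq α :=
      Complex.normSq_mul _ _
    have e1 : Complex.normSq (lam₁ * γc) = Complex.normSq lam₁ * Complex.normSq γc :=
      Complex.normSq_mul _ _
    rw [e0] at hrow0
    rw [e1] at hrow1
    have e3 : Complex.normSq lam₁ * Complex.normSq α + Complex.normSq lam₁ * Complex.normSq γc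
        = Complex.normSq lam₁ := by rw [← mul_add, hDr, mul_one]
    linarith [hrow0, hrow1, hcol, e3]
  -- now prove the set equality
  ext z
  rw [nr_mem]
  simp only [Set.mem_setOf_eq]
  set m := (lam₁ + lam₂) / 2 with hm
  set c := (lam₁ - lam₂) / 2 with hc
  set βh := b / 2 with hβh
  have equiv1 : (∃ p q : ℂ, Complex.normSq p + Complex.normSq q = 1 ∧
      z = conj p * (A 0 0 * p + A 0 1 * q) + conj q * (A 1 0 * p + A 1 1 * q))
      ↔ (∃ p q : ℂ, Complex.normSq p + Complex.normSq q = 1 ∧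
        z = lam₁ * (conj p * p) + lam₂ * (conj q * q) + b * (conj p * q)) := by
    constructor
    · rintro ⟨ψ0, ψ1, hC, rfl⟩
      refine ⟨conj α * ψ0 + conj γc * ψ1, -γc * ψ0 + α * ψ1, ?_, ?_⟩
      · exact (parseval2 α γc ψ0 ψ1 hD).trans hC
      · rw [master_val (A 0 0) (A 0 1) (A 1 0) (A 1 1) lam₁ α γc ψ0 ψ1 hD hE0 hE1]
        rw [← hbdef, ← hμdef, hμ]
    · rintro ⟨p, q, hC, rfl⟩
      refine ⟨α * p - conj γc * q, γc * p + conj α * q, ?_, ?_⟩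
      · have hD2 : conj (conj α) * conj α + conj (-γc) * (-γc) = 1 := by
          simp only [Complex.conj_conj, map_neg]
          linear_combination hD
        have h := parseval2 (conj α) (-γc) p q hD2
        have e0 : conj (conj α) * p + conj (-γc) * q = α * p - conj γc * q := by
          simp only [Complex.conj_conj, map_neg]
          ring
        have e1 : -(-γc) * p + conj α * q = γc * p + conj α * q := by ring
        rw [e0, e1] at h
        exact h.trans hC
      · have hp : conj α * (α * p - conj γc * q) + conj γc * (γc * p + conj α * q) = p := by
          linear_combination p * hD
        have hq : -γc * (α * p - conj γc * q) + α * (γc * p + conj α * q) = q := by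
          linear_combination q * hD
        rw [master_val (A 0 0) (A 0 1) (A 1 0) (A 1 1) lam₁ α γc _ _ hD hE0 hE1]
        rw [← hbdef, ← hμdef, hμ, hp, hq]
  rw [equiv1]
  have equiv2 : (∃ p q : ℂ, Complex.normSq p + Complex.normSq q = 1 ∧
      z = lam₁ * (conj p * p) + lam₂ * (conj q * q) + b * (conj p * q))
      ↔ (∃ x : ℝ, ∃ w : ℂ, x ^ 2 + ‖w‖ ^ 2 = 1 ∧ z - m = c * x + βh * w) := by
    constructor
    · rintro ⟨p, q, hC, rfl⟩
      refine ⟨Complex.normSq p - Complex.normSq q, 2 * (conj p * q), ?_, ?_⟩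
      · rw [Complex.sq_norm, Complex.normSq_mul, Complex.normSq_mul, Complex.normSq_conj]
        have : Complex.normSq (2:ℂ) = 4 := by
          simp [Complex.normSq_apply]
          norm_num
        rw [this]
        nlinarith [hC]
      · have hCc : conj p * p + conj q * q = 1 := by
          rw [← Complex.normSq_eq_conj_mul_self, ← Complex.normSq_eq_conj_mul_self]
          exact_mod_cast congrArg Complex.ofReal hC
        have hx : ((Complex.normSq p - Complex.normSq q : ℝ) : ℂ)
            = conj p * p - conj q * q := by
          push_cast
          rw [Complex.normSq_eq_conj_mul_self, Complex.normSq_eq_conj_mul_self]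
        rw [hm, hc, hβh, hx]
        linear_combination ((lam₁ + lam₂)/2) * hCc
    · rintro ⟨x, w, hcon, hz⟩
      have hx1 : -1 ≤ x := by nlinarith [sq_nonneg (‖w‖)]
      rcases eq_or_lt_of_le hx1 with hxe | hxlt
      · -- x = -1, w = 0
        have hw0 : w = 0 := by
          have : ‖w‖ ^ 2 = 0 := by nlinarith
          simpa using (pow_eq_zero_iff (two_ne_zero).elim).mp this
        refine ⟨0, 1, by simp, ?_⟩
        rw [← hxe, hw0] at hz
        have hz2 : z = m - c := by
          push_cast at hz
          linear_combination hz
        rw [hz2, hm, hc]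
        simp
        ring
      · -- x > -1
        have hppos : 0 < (1 + x) / 2 := by linarith
        set pr := Real.sqrt ((1 + x) / 2) with hpr
        have hprpos : 0 < pr := Real.sqrt_pos.mpr hppos
        have hpr2 : pr ^ 2 = (1 + x) / 2 := Real.sq_sqrt hppos.le
        set p := (pr : ℂ) with hp
        have hpne : p ≠ 0 := Complex.ofReal_ne_zero.mpr (ne_of_gt hprpos)
        set q := w / (2 * p) with hq
        have hnp : Complex.normSq p = (1 + x) / 2 := by
          rw [hp, Complex.normSq_ofReal, ← hpr2]
          ring
        have hpp : conj p * p = (((1 + x) / 2 : ℝ) : ℂ) := by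
          rw [← Complex.normSq_eq_conj_mul_self, hnp]
        have hnq : Complex.normSq q = (1 - x) / 2 := by
          rw [hq, Complex.normSq_div, Complex.normSq_mul, hnp]
          have h2 : Complex.normSq (2:ℂ) = 4 := by
            simp [Complex.normSq_apply]
            norm_num
          rw [h2]
          have hw2 : Complex.normSq w = 1 - x ^ 2 := by
            rw [← Complex.sq_norm]; linarith
          rw [hw2, show (4:ℝ) * ((1 + x) / 2) = 2 * (1 + x) by ring,
            div_eq_div_iff (by nlinarith : (2:ℝ) * (1 + x) ≠ 0) (by norm_num : (2:ℝ) ≠ 0)]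
          ring
        have hpq : conj p * q = w / 2 := by
          rw [hq, hp, Complex.conj_ofReal]
          field_simp
          exact mul_div_cancel_left₀ w (Complex.ofReal_ne_zero.mpr (ne_of_gt hprpos))
        refine ⟨p, q, by rw [hnp, hnq]; ring, ?_⟩
        have hqq : conj q * q = (((1 - x) / 2 : ℝ) : ℂ) := by
          rw [← Complex.normSq_eq_conj_mul_self, hnq]
        rw [hpp, hqq, hpq]
        have hz2 : z = m + c * x + βh * w := by linear_combination hz
        rw [hz2, hm, hc, hβh]
        push_cast
        ring
  rw [equiv2, core_iff]
  -- final cosmetic rewriting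
  have efoci1 : z - m - c = z - lam₁ := by rw [hm, hc]; ring
  have efoci2 : z - m + c = z - lam₂ := by rw [hm, hc]; ring
  rw [efoci1, efoci2]
  have erad : 2 * Real.sqrt (Complex.normSq c + Complex.normSq βh)
      = Real.sqrt (‖lam₁ - lam₂‖ ^ 2 +
          ((A * Aᴴ).trace.re - ‖lam₁‖ ^ 2 - ‖lam₂‖ ^ 2)) := by
    have h4 : (2:ℝ) * Real.sqrt (Complex.normSq c + Complex.normSq βh)
        = Real.sqrt (4 * (Complex.normSq c + Complex.normSq βh)) := by
      rw [show (4:ℝ) * (Complex.normSq c + Complex.normSq βh)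
        = (2:ℝ)^2 * (Complex.normSq c + Complex.normSq βh) by ring]
      rw [Real.sqrt_mul (by positivity), Real.sqrt_sq (by norm_num)]
    rw [h4]
    congr 1
    have h2 : Complex.normSq (2:ℂ) = 4 := by
      simp [Complex.normSq_apply]
      norm_num
    have hcv : Complex.normSq c = Complex.normSq (lam₁ - lam₂) / 4 := by
      rw [hc, Complex.normSq_div, h2]
    have hbv : Complex.normSq βh = Complex.normSq b / 4 := by
      rw [hβh, Complex.normSq_div, h2]
    rw [hcv, hbv, Complex.sq_norm, Complex.sq_norm, Complex.sq_norm]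
    have hbval : Complex.normSq b = (A * Aᴴ).trace.re
        - Complex.normSq lam₁ - Complex.normSq lam₂ := by
      rw [← hb2, hμ]
      ring
    rw [hbval]
    ring
  rw [erad]
end
end
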